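/- arXiv:2005.00713 — 7 statements merged into one kernel-verified Lean document; each statement's English description precedes it below -/
import Mathlib

section
/- Let f be analytic on the unit disk D with S := sup_{ζ∈D} (1-|ζ|²)|f'(ζ)| < ∞ (i.e. f in the Bloch space). Then there is an absolute constant C such that for all z, w ∈ D: |(1-|z|²)f'(z) - (1-|w|²)f'(w)| ≤ C·S·ρ(z,w), where ρ(z,w) = |z-w|/|1-conj(w)z| is the pseudo-hyperbolic distance. -/
set_option autoImplicit false

open Metric

/-- Key algebraic identity: `|1 - conj w * z|² - |z - w|² = (1 - |z|²)(1 - |w|²)`. -/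
lemma key_id (z w : ℂ) :
    ‖1 - (starRingEnd ℂ) w * z‖ ^ 2 - ‖z - w‖ ^ 2 = (1 - ‖z‖ ^ 2) * (1 - ‖w‖ ^ 2) := by
  have h1 : ‖1 - (starRingEnd ℂ) w * z‖ ^ 2 = Complex.normSq (1 - (starRingEnd ℂ) w * z) := by
    rw [Complex.sq_norm]
  have h2 : ‖z - w‖ ^ 2 = Complex.normSq (z - w) := by
    rw [Complex.sq_norm]
  have h3 : ‖z‖ ^ 2 = Complex.normSq z := by rw [Complex.sq_norm]
  have h4 : ‖w‖ ^ 2 = Complex.normSq w := by rw [Complex.sq_norm]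
  rw [h1, h2, h3, h4]
  simp only [Complex.normSq_apply, Complex.sub_re, Complex.sub_im, Complex.mul_re,
    Complex.mul_im, Complex.one_re, Complex.one_im, Complex.conj_re, Complex.conj_im]
  ring

/-- Cauchy-type estimate for the second derivative of a Bloch function. -/
lemma deriv2_bound (f : ℂ → ℂ) (S : ℝ) (hSpos : 0 < S)
    (hg : DifferentiableOn ℂ (deriv f) (ball (0:ℂ) 1))
    (hb : ∀ ζ ∈ ball (0:ℂ) 1, (1 - ‖ζ‖ ^ 2) * ‖deriv f ζ‖ ≤ S)
    (ζ : ℂ) (hζ : ‖ζ‖ < 1) :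
    ‖deriv (deriv f) ζ‖ ≤ 12 * S / (1 - ‖ζ‖) ^ 2 := by
  set r : ℝ := (1 - ‖ζ‖) / 2 with hr_def
  have hr : 0 < r := by have := norm_nonneg ζ; simp only [hr_def]; linarith
  have hsub : ball ζ r ⊆ ball (0:ℂ) 1 := by
    intro u hu
    rw [mem_ball, dist_eq_norm] at hu
    rw [mem_ball_zero_iff]
    calc ‖u‖ = ‖ζ + (u - ζ)‖ := by ring_nf
    _ ≤ ‖ζ‖ + ‖u - ζ‖ := norm_add_le _ _
    _ < ‖ζ‖ + r := by linarith
    _ < 1 := by simp only [hr_def]; linarith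
  have hball_bound : ∀ u ∈ ball ζ r, ‖deriv f u‖ ≤ S / r := by
    intro u hu
    have hu1 : ‖u‖ < 1 - r := by
      rw [mem_ball, dist_eq_norm] at hu
      calc ‖u‖ = ‖ζ + (u - ζ)‖ := by ring_nf
      _ ≤ ‖ζ‖ + ‖u - ζ‖ := norm_add_le _ _
      _ < ‖ζ‖ + r := by linarith
      _ = 1 - r := by simp only [hr_def]; ring
    have hu0 : (0:ℝ) ≤ ‖u‖ := norm_nonneg u
    have hru : r ≤ 1 - ‖u‖ ^ 2 := by nlinarith
    have hbu := hb u (hsub hu)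
    rw [le_div_iff₀ hr]
    nlinarith [norm_nonneg (deriv f u)]
  have hmaps : Set.MapsTo (deriv f) (ball ζ r) (ball (deriv f ζ) (3 * S / r)) := by
    intro u hu
    rw [mem_ball, dist_eq_norm]
    have h1 := hball_bound u hu
    have h2 := hball_bound ζ (mem_ball_self hr)
    have hSr : 0 < S / r := div_pos hSpos hr
    calc ‖deriv f u - deriv f ζ‖ ≤ ‖deriv f u‖ + ‖deriv f ζ‖ := norm_sub_le _ _
    _ ≤ S / r + S / r := by linarith
    _ < 3 * S / r := by rw [← add_div, div_lt_div_iff₀ hr hr]; nlinarith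
  have hkey := Complex.norm_deriv_le_div_of_mapsTo_ball (hg.mono hsub) (hmaps.mono_right ball_subset_closedBall) hr
  calc ‖deriv (deriv f) ζ‖ ≤ 3 * S / r / r := hkey
  _ = 12 * S / (1 - ‖ζ‖) ^ 2 := by
      simp only [hr_def]; field_simp; ring

set_option maxHeartbeats 1000000 in
/-- The purely arithmetic part of the hard case (small pseudo-hyperbolic distance). -/
lemma bloch_arith (a b M A d S N W L e : ℝ)
    (ha0 : 0 ≤ a) (hb0 : 0 ≤ b)
    (hM : M = max a b) (hM1 : M < 1)
    (hA0 : 0 < A) (hd0 : 0 ≤ d) (hS0 : 0 ≤ S)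
    (hcase : 2 * d < A)
    (hid : A ^ 2 - d ^ 2 = (1 - a ^ 2) * (1 - b ^ 2))
    (hA1 : (1 - a ^ 2) / 2 ≤ A) (hA2 : (1 - b ^ 2) / 2 ≤ A)
    (hN : 0 ≤ N) (hW : 0 ≤ W)
    (hlip : N * (1 - M) ^ 2 ≤ 48 * S * d)
    (hfw : (1 - b ^ 2) * W ≤ S)
    (he0 : 0 ≤ e) (he : e ≤ 2 * d)
    (hLsplit : L ≤ (1 - a ^ 2) * N + e * W) :
    L ≤ 100000 * S * (d / A) := by
  have haM : a ≤ M := by rw [hM]; exact le_max_left a b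
  have hbM : b ≤ M := by rw [hM]; exact le_max_right a b
  have ha1 : a < 1 := lt_of_le_of_lt haM hM1
  have hb1 : b < 1 := lt_of_le_of_lt hbM hM1
  have hM0 : 0 ≤ M := le_trans ha0 haM
  set m : ℝ := 1 - M with hm_def
  have hm0 : 0 < m := by rw [hm_def]; linarith
  have h1a2 : (0:ℝ) ≤ 1 - a ^ 2 := by nlinarith
  have h1b2 : (0:ℝ) ≤ 1 - b ^ 2 := by nlinarith
  have hdA2 : d * d ≤ (A / 2) * (A / 2) := mul_self_le_mul_self hd0 (by linarith)
  have h34 : 3 / 4 * A ^ 2 ≤ (1 - a ^ 2) * (1 - b ^ 2) := by nlinarith [hdA2]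
  have hbA : 3 * A ≤ 8 * (1 - b ^ 2) := by
    nlinarith [mul_le_mul_of_nonneg_right (show 1 - a ^ 2 ≤ 2 * A by linarith) h1b2,
      mul_pos hA0 hA0]
  have haA : 3 * A ≤ 8 * (1 - a ^ 2) := by
    nlinarith [mul_le_mul_of_nonneg_right (show 1 - b ^ 2 ≤ 2 * A by linarith) h1a2,
      mul_pos hA0 hA0]
  have hMA : 3 * A ≤ 8 * (1 - M ^ 2) := by
    rcases le_total a b with h | h
    · rw [hM, max_eq_right h]; linarith
    · rw [hM, max_eq_left h]; linarith
  have hMa : 3 * (1 - a ^ 2) ≤ 16 * (1 - M ^ 2) := by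
    rcases le_total a b with h | h
    · rw [hM, max_eq_right h]; linarith
    · rw [hM, max_eq_left h]; linarith
  have hm' : 1 - M ^ 2 ≤ 2 * m := by rw [hm_def]; nlinarith
  have hsq : (1 - M ^ 2) * (1 - M ^ 2) ≤ (2 * m) * (2 * m) :=
    mul_self_le_mul_self (by nlinarith) hm'
  have hm2 : 9 * (A * (1 - a ^ 2)) ≤ 512 * m ^ 2 := by
    have hprod : (3 * A) * (3 * (1 - a ^ 2)) ≤ (8 * (1 - M ^ 2)) * (16 * (1 - M ^ 2)) :=
      mul_le_mul hMA hMa (by linarith) (by nlinarith)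
    nlinarith [hprod, hsq]
  have hE1 : 9 * ((1 - a ^ 2) * N * A) ≤ 24576 * (S * d) := by
    nlinarith [mul_le_mul_of_nonneg_left hm2 hN,
      mul_le_mul_of_nonneg_left hlip (show (0:ℝ) ≤ 512 by norm_num)]
  have hE2 : 3 * (W * A) ≤ 8 * S := by
    nlinarith [mul_le_mul_of_nonneg_right hbA hW,
      mul_le_mul_of_nonneg_left hfw (show (0:ℝ) ≤ 8 by norm_num)]
  have hE2' : e * W * A ≤ 6 * (S * d) := by
    have h1 : e * (W * A) ≤ 2 * d * (W * A) :=
      mul_le_mul_of_nonneg_right he (mul_nonneg hW hA0.le)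
    have h2 : W * A ≤ 8 * S / 3 := by linarith
    nlinarith [mul_le_mul_of_nonneg_left h2 (show (0:ℝ) ≤ 2 * d by linarith)]
  rw [show (100000 : ℝ) * S * (d / A) = 100000 * S * d / A by ring, le_div_iff₀ hA0]
  have hLA := mul_le_mul_of_nonneg_right hLsplit hA0.le
  linarith [hLA, hE1, hE2', mul_nonneg hS0 hd0]

set_option maxHeartbeats 1000000 in
/-- Lipschitz-type estimate for Bloch functions with respect to the
pseudo-hyperbolic distance. -/
theorem stmt_3 :
    ∃ C > 0, ∀ (f : ℂ → ℂ) (S : ℝ),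
      DifferentiableOn ℂ f (ball (0:ℂ) 1) →
      (∀ ζ ∈ ball (0:ℂ) 1, (1 - ‖ζ‖ ^ 2) * ‖deriv f ζ‖ ≤ S) →
      ∀ z ∈ ball (0:ℂ) 1, ∀ w ∈ ball (0:ℂ) 1,
        ‖((1 - ‖z‖ ^ 2 : ℝ) : ℂ) * deriv f z - ((1 - ‖w‖ ^ 2 : ℝ) : ℂ) * deriv f w‖ ≤
          C * S * ‖(z - w) / (1 - (starRingEnd ℂ) w * z)‖ := by
  refine ⟨100000, by norm_num, ?_⟩
  intro f S hf hS z hzball w hwball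
  have ha : ‖z‖ < 1 := mem_ball_zero_iff.mp hzball
  have hb : ‖w‖ < 1 := mem_ball_zero_iff.mp hwball
  have ha0 : (0:ℝ) ≤ ‖z‖ := norm_nonneg z
  have hb0 : (0:ℝ) ≤ ‖w‖ := norm_nonneg w
  have hS0 : 0 ≤ S := by
    have h0 := hS 0 (by simp)
    simp only [norm_zero] at h0
    have := norm_nonneg (deriv f 0)
    nlinarith
  set a : ℝ := ‖z‖ with ha_def
  set b : ℝ := ‖w‖ with hb_def
  set A : ℝ := ‖1 - (starRingEnd ℂ) w * z‖ with hA_def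
  set d : ℝ := ‖z - w‖ with hd_def
  have hd0 : 0 ≤ d := norm_nonneg _
  have h1a2 : (0:ℝ) ≤ 1 - a ^ 2 := by nlinarith
  have h1b2 : (0:ℝ) ≤ 1 - b ^ 2 := by nlinarith
  -- lower bounds for A
  have hAlow : 1 - b * a ≤ A := by
    have h1 : ‖(1:ℂ)‖ - ‖(starRingEnd ℂ) w * z‖ ≤ ‖1 - (starRingEnd ℂ) w * z‖ :=
      norm_sub_norm_le _ _
    have h2 : ‖(starRingEnd ℂ) w * z‖ = b * a := by
      rw [norm_mul, RCLike.norm_conj]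
    rw [h2, norm_one] at h1
    exact h1
  have hA0 : 0 < A := by nlinarith [mul_nonneg hb0 ha0, mul_le_mul_of_nonneg_right hb.le ha0]
  have hA1 : (1 - a ^ 2) / 2 ≤ A := by
    nlinarith [sq_nonneg (1 - a), mul_nonneg ha0 (show (0:ℝ) ≤ 1 - b by linarith)]
  have hA2 : (1 - b ^ 2) / 2 ≤ A := by
    nlinarith [sq_nonneg (1 - b), mul_nonneg hb0 (show (0:ℝ) ≤ 1 - a by linarith)]
  -- rewrite the RHS norm
  have hRHS : ‖(z - w) / (1 - (starRingEnd ℂ) w * z)‖ = d / A := by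
    rw [norm_div]
  rw [hRHS]
  -- the identity
  have hid : A ^ 2 - d ^ 2 = (1 - a ^ 2) * (1 - b ^ 2) := key_id z w
  have hfz := hS z hzball
  have hfw := hS w hwball
  by_cases hcase : A ≤ 2 * d
  · -- easy case: pseudo-hyperbolic distance at least 1/2
    have hX : ‖((1 - a ^ 2 : ℝ) : ℂ) * deriv f z‖ ≤ S := by
      rw [norm_mul, Complex.norm_real, Real.norm_eq_abs, abs_of_nonneg h1a2]
      exact hfz
    have hY : ‖((1 - b ^ 2 : ℝ) : ℂ) * deriv f w‖ ≤ S := by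
      rw [norm_mul, Complex.norm_real, Real.norm_eq_abs, abs_of_nonneg h1b2]
      exact hfw
    have hbig : ‖((1 - a ^ 2 : ℝ) : ℂ) * deriv f z - ((1 - b ^ 2 : ℝ) : ℂ) * deriv f w‖ ≤
        2 * S := (norm_sub_le _ _).trans (by linarith)
    refine hbig.trans ?_
    have hdA : 1 / 2 ≤ d / A := by rw [le_div_iff₀ hA0]; linarith
    have hkey := mul_le_mul_of_nonneg_left hdA (by positivity : (0:ℝ) ≤ 100000 * S)
    linarith
  · -- hard case: pseudo-hyperbolic distance less than 1/2
    push_neg at hcase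
    -- splitting of the difference
    have hsplit : ‖((1 - a ^ 2 : ℝ) : ℂ) * deriv f z - ((1 - b ^ 2 : ℝ) : ℂ) * deriv f w‖ ≤
        (1 - a ^ 2) * ‖deriv f z - deriv f w‖ + |b ^ 2 - a ^ 2| * ‖deriv f w‖ := by
      have heq : ((1 - a ^ 2 : ℝ) : ℂ) * deriv f z - ((1 - b ^ 2 : ℝ) : ℂ) * deriv f w =
          ((1 - a ^ 2 : ℝ) : ℂ) * (deriv f z - deriv f w) +
            ((b ^ 2 - a ^ 2 : ℝ) : ℂ) * deriv f w := by
        push_cast; ring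
      rw [heq]
      refine (norm_add_le _ _).trans (le_of_eq ?_)
      rw [norm_mul, norm_mul, Complex.norm_real, Complex.norm_real, Real.norm_eq_abs,
        Real.norm_eq_abs, abs_of_nonneg h1a2]
    -- the case S = 0
    rcases eq_or_lt_of_le hS0 with hSeq | hSpos
    · have hz0 : deriv f z = 0 := by
        have h1 := hfz; rw [← hSeq] at h1
        have h2 : (0:ℝ) < 1 - a ^ 2 := by nlinarith
        have h3 := norm_nonneg (deriv f z)
        have h4 : ‖deriv f z‖ = 0 := by nlinarith
        exact norm_eq_zero.mp h4
      have hw0 : deriv f w = 0 := by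
        have h1 := hfw; rw [← hSeq] at h1
        have h2 : (0:ℝ) < 1 - b ^ 2 := by nlinarith
        have h3 := norm_nonneg (deriv f w)
        have h4 : ‖deriv f w‖ = 0 := by nlinarith
        exact norm_eq_zero.mp h4
      rw [hz0, hw0]
      simp [← hSeq]
    -- the mean value estimate
    set M : ℝ := max a b with hM_def
    have hM1 : M < 1 := max_lt ha hb
    set m : ℝ := 1 - M with hm_def
    have hm0 : 0 < m := by rw [hm_def]; linarith
    have hg : DifferentiableOn ℂ (deriv f) (ball (0:ℂ) 1) :=
      ((hf.analyticOnNhd isOpen_ball).deriv).differentiableOn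
    set R : ℝ := (1 + M) / 2 with hR_def
    have hR1 : R < 1 := by rw [hR_def]; linarith
    have hzR : ‖z‖ < R := by
      have h := le_max_left a b
      rw [hR_def, ← ha_def]; rw [← hM_def] at h; linarith
    have hwR : ‖w‖ < R := by
      have h := le_max_right a b
      rw [hR_def, ← hb_def]; rw [← hM_def] at h; linarith
    have hss : ball (0:ℂ) R ⊆ ball (0:ℂ) 1 := ball_subset_ball hR1.le
    have hbound : ∀ x ∈ ball (0:ℂ) R, ‖deriv (deriv f) x‖ ≤ 48 * S / m ^ 2 := by
      intro x hx
      have hx1 : ‖x‖ < R := mem_ball_zero_iff.mp hx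
      have hx2 : ‖x‖ < 1 := hx1.trans hR1
      refine (deriv2_bound f S hSpos hg hS x hx2).trans ?_
      have hxm : m / 2 ≤ 1 - ‖x‖ := by rw [hm_def, hR_def] at *; linarith
      have hm2pos : (0:ℝ) < (m / 2) ^ 2 := by positivity
      have h1 : (m / 2) ^ 2 ≤ (1 - ‖x‖) ^ 2 :=
        pow_le_pow_left₀ (by positivity) hxm 2
      calc 12 * S / (1 - ‖x‖) ^ 2 ≤ 12 * S / (m / 2) ^ 2 :=
        div_le_div_of_nonneg_left (by linarith) hm2pos h1
      _ = 48 * S / m ^ 2 := by field_simp; ring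
    have hlip : ‖deriv f z - deriv f w‖ ≤ 48 * S / m ^ 2 * ‖z - w‖ :=
      Convex.norm_image_sub_le_of_norm_deriv_le
        (fun x hx => hg.differentiableAt (isOpen_ball.mem_nhds (hss hx)))
        hbound (convex_ball 0 R) (mem_ball_zero_iff.mpr hwR) (mem_ball_zero_iff.mpr hzR)
    have hm2pos : (0:ℝ) < m ^ 2 := by positivity
    have hlip' : ‖deriv f z - deriv f w‖ * m ^ 2 ≤ 48 * S * d := by
      rw [div_mul_eq_mul_div, ← hd_def] at hlip
      rw [← le_div_iff₀ hm2pos]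
      exact hlip.trans (le_of_eq (by ring))
    -- bound on |b² - a²|
    have habs : |b ^ 2 - a ^ 2| ≤ 2 * d := by
      have h1 : |b - a| ≤ d := by
        rw [hd_def, hb_def, ha_def]
        calc |‖w‖ - ‖z‖| ≤ ‖w - z‖ := abs_norm_sub_norm_le w z
        _ = ‖z - w‖ := norm_sub_rev w z
      have h2 : b ^ 2 - a ^ 2 = (b - a) * (b + a) := by ring
      rw [h2, abs_mul, abs_of_nonneg (by linarith : (0:ℝ) ≤ b + a)]
      nlinarith [abs_nonneg (b - a)]
    -- conclude by the arithmetic lemma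
    exact bloch_arith a b M A d S ‖deriv f z - deriv f w‖ ‖deriv f w‖ _ (|b ^ 2 - a ^ 2|)
      ha0 hb0 hM_def hM1 hA0 hd0 hS0 hcase hid hA1 hA2
      (norm_nonneg _) (norm_nonneg _) hlip' hfw (abs_nonneg _) habs hsplit
end

section
/- Let ν be a positive continuous radial weight on D. Suppose φ, ψ : D → D are analytic with: (i) ν(z)|φ'(z) - ψ'(z)| → 0 as |z| → 1⁻, and (ii) ν(z)|φ(z)φ'(z) - ψ(z)ψ'(z)| → 0 as |z| → 1⁻. Then ν(z)|φ(z) - ψ(z)|·max{|φ'(z)|, |ψ'(z)|} → 0 as |z| → 1⁻. -/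
set_option autoImplicit false

open Metric

/-- If `ν|φ'-ψ'| → 0` and `ν|φφ'-ψψ'| → 0` as `|z| → 1⁻`, then
`ν|φ-ψ|·max{|φ'|,|ψ'|} → 0` as `|z| → 1⁻`. -/
theorem stmt_8 (φ ψ : ℂ → ℂ) (ν : ℂ → ℝ)
    (hφ : DifferentiableOn ℂ φ (ball (0:ℂ) 1))
    (hψ : DifferentiableOn ℂ ψ (ball (0:ℂ) 1))
    (hφm : ∀ z ∈ ball (0:ℂ) 1, φ z ∈ ball (0:ℂ) 1)
    (hψm : ∀ z ∈ ball (0:ℂ) 1, ψ z ∈ ball (0:ℂ) 1)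
    (hνpos : ∀ z ∈ ball (0:ℂ) 1, 0 < ν z)
    (hνcont : ContinuousOn ν (ball (0:ℂ) 1))
    (hνrad : ∀ z w : ℂ, z ∈ ball (0:ℂ) 1 → w ∈ ball (0:ℂ) 1 → ‖z‖ = ‖w‖ → ν z = ν w)
    (h1 : ∀ ε > 0, ∃ r < (1:ℝ), ∀ z ∈ ball (0:ℂ) 1, r < ‖z‖ →
      ν z * ‖deriv φ z - deriv ψ z‖ < ε)
    (h2 : ∀ ε > 0, ∃ r < (1:ℝ), ∀ z ∈ ball (0:ℂ) 1, r < ‖z‖ →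
      ν z * ‖φ z * deriv φ z - ψ z * deriv ψ z‖ < ε) :
    ∀ ε > 0, ∃ r < (1:ℝ), ∀ z ∈ ball (0:ℂ) 1, r < ‖z‖ →
      ν z * ‖φ z - ψ z‖ * max ‖deriv φ z‖ ‖deriv ψ z‖ < ε := by
  intro ε hε
  obtain ⟨r1, hr1, H1⟩ := h1 (ε / 2) (by linarith)
  obtain ⟨r2, hr2, H2⟩ := h2 (ε / 2) (by linarith)
  refine ⟨max r1 r2, by simp [hr1, hr2], fun z hz hrz => ?_⟩
  have hz1 : r1 < ‖z‖ := lt_of_le_of_lt (le_max_left _ _) hrz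
  have hz2 : r2 < ‖z‖ := lt_of_le_of_lt (le_max_right _ _) hrz
  have hA := H1 z hz hz1
  have hB := H2 z hz hz2
  set a := φ z
  set b := ψ z
  set a' := deriv φ z
  set b' := deriv ψ z
  have hv : 0 ≤ ν z := (hνpos z hz).le
  have ha : ‖a‖ ≤ 1 := by
    have := hφm z hz; simpa [a] using (mem_ball_zero_iff.mp this).le
  have hb : ‖b‖ ≤ 1 := by
    have := hψm z hz; simpa [b] using (mem_ball_zero_iff.mp this).le
  have key : ∀ c' : ℂ, ‖(a - b) * c'‖ ≤ ‖a * a' - b * b'‖ + ‖a' - b'‖ →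
      ν z * ‖a - b‖ * ‖c'‖ < ε := by
    intro c' hle
    have : ν z * ‖a - b‖ * ‖c'‖ = ν z * ‖(a - b) * c'‖ := by
      rw [norm_mul]; ring
    rw [this]
    calc ν z * ‖(a - b) * c'‖ ≤ ν z * (‖a * a' - b * b'‖ + ‖a' - b'‖) := by
          exact mul_le_mul_of_nonneg_left hle hv
      _ = ν z * ‖a * a' - b * b'‖ + ν z * ‖a' - b'‖ := by ring
      _ < ε / 2 + ε / 2 := add_lt_add hB hA
      _ = ε := by ring
  rcases max_cases ‖a'‖ ‖b'‖ with ⟨h, _⟩ | ⟨h, _⟩ <;> rw [h]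
  · apply key
    have e : (a - b) * a' = (a * a' - b * b') - b * (a' - b') := by ring
    calc ‖(a - b) * a'‖ = ‖(a * a' - b * b') - b * (a' - b')‖ := by rw [e]
      _ ≤ ‖a * a' - b * b'‖ + ‖b * (a' - b')‖ := norm_sub_le _ _
      _ ≤ ‖a * a' - b * b'‖ + ‖a' - b'‖ := by
          rw [norm_mul]
          have := mul_le_of_le_one_left (norm_nonneg (a' - b')) hb
          linarith
  · apply key
    have e : (a - b) * b' = (a * a' - b * b') - a * (a' - b') := by ring
    calc ‖(a - b) * b'‖ = ‖(a * a' - b * b') - a * (a' - b')‖ := by rw [e]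
      _ ≤ ‖a * a' - b * b'‖ + ‖a * (a' - b')‖ := norm_sub_le _ _
      _ ≤ ‖a * a' - b * b'‖ + ‖a' - b'‖ := by
          rw [norm_mul]
          have := mul_le_of_le_one_left (norm_nonneg (a' - b')) ha
          linarith
end

section
/- Let ν be a positive continuous radial weight on D and L a closed subset of the little Bloch type space 𝓑_{ν,0}. Then L is compact (in the norm topology of 𝓑_ν) if and only if L is bounded in 𝓑_ν and lim_{|z|→1⁻} sup_{f∈L} ν(z)|f'(z)| = 0. -/
set_option autoImplicit false
set_option maxHeartbeats 1000000

open Metric Set Filter Topology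

/-- The Bloch-type distance `‖f(0)-g(0)‖ + sup_{z∈D} ν(z)|f'(z)-g'(z)|`. -/
noncomputable def blochDist (ν : ℂ → ℝ) (f g : ℂ → ℂ) : ℝ :=
  ‖f 0 - g 0‖ + sSup ((fun z => ν z * ‖deriv f z - deriv g z‖) '' ball (0:ℂ) 1)

/-- Membership in the little Bloch type space `𝓑_{ν,0}`. -/
def memLittleBloch (ν : ℂ → ℝ) (f : ℂ → ℂ) : Prop :=
  DifferentiableOn ℂ f (ball (0:ℂ) 1) ∧
    (∃ M : ℝ, ∀ z ∈ ball (0:ℂ) 1, ν z * ‖deriv f z‖ ≤ M) ∧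
    ∀ ε > 0, ∃ r < (1:ℝ), ∀ z ∈ ball (0:ℂ) 1, r < ‖z‖ → ν z * ‖deriv f z‖ < ε

lemma mvt_aux {f : ℂ → ℂ} {s : Set ℂ} (hs : Convex ℝ s)
    (hf : ∀ x ∈ s, DifferentiableAt ℂ f x) {C : ℝ}
    (hC : ∀ x ∈ s, ‖deriv f x‖ ≤ C) {x y : ℂ} (hx : x ∈ s) (hy : y ∈ s) :
    ‖f y - f x‖ ≤ C * ‖y - x‖ := by
  refine hs.norm_image_sub_le_of_norm_hasFDerivWithin_le
    (f' := fun z => ContinuousLinearMap.smulRight (1 : ℂ →L[ℂ] ℂ) (deriv f z))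
    (fun z hz => ((hf z hz).hasDerivAt.hasFDerivAt).hasFDerivWithinAt)
    (fun z hz => ?_) hx hy
  rw [ContinuousLinearMap.norm_smulRight_apply]
  simpa using hC z hz

lemma sSup_image_le' {h : ℂ → ℝ} {M : ℝ} (hM0 : 0 ≤ M)
    (hM : ∀ z ∈ ball (0:ℂ) 1, h z ≤ M) :
    sSup (h '' ball (0:ℂ) 1) ≤ M :=
  Real.sSup_le (by rintro _ ⟨w, hw, rfl⟩; exact hM w hw) hM0

lemma le_sSup_image' {h : ℂ → ℝ} {M : ℝ} (hM : ∀ z ∈ ball (0:ℂ) 1, h z ≤ M)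
    {z : ℂ} (hz : z ∈ ball (0:ℂ) 1) :
    h z ≤ sSup (h '' ball (0:ℂ) 1) :=
  le_csSup ⟨M, by rintro _ ⟨w, hw, rfl⟩; exact hM w hw⟩ (mem_image_of_mem _ hz)

lemma sSup_image_nonneg' {h : ℂ → ℝ} (hM : ∀ z ∈ ball (0:ℂ) 1, 0 ≤ h z) :
    0 ≤ sSup (h '' ball (0:ℂ) 1) :=
  Real.sSup_nonneg (by rintro _ ⟨w, hw, rfl⟩; exact hM w hw)

lemma key_montel (F : ℕ → ℂ → ℂ)
    (hdiff : ∀ n, DifferentiableOn ℂ (F n) (ball (0:ℂ) 1))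
    (hderiv : ∀ ρ : ℝ, ρ < 1 → ∃ C : ℝ, 0 ≤ C ∧
      ∀ n, ∀ z ∈ closedBall (0:ℂ) ρ, ‖deriv (F n) z‖ ≤ C)
    (hval : ∃ B : ℝ, ∀ n, ‖F n 0‖ ≤ B) :
    ∃ (g : ℂ → ℂ) (k : ℕ → ℕ), StrictMono k ∧
      TendstoLocallyUniformlyOn (fun n => F (k n)) g Filter.atTop (ball (0:ℂ) 1) := by
  obtain ⟨B, hB⟩ := hval
  set D : Set ℂ := ball (0:ℂ) 1 with hD
  haveI : LocallyCompactSpace ↥D := isOpen_ball.isLocallyClosed.locallyCompactSpace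
  -- bound for values and derivatives near a point
  have hball : ∀ z : ℂ, z ∈ D → ∀ w : ℂ, w ∈ ball z ((1 - ‖z‖)/4) → w ∈ D ∧
      w ∈ closedBall (0:ℂ) ((1 + ‖z‖)/2) := by
    intro z hz w hw
    have hz1 : ‖z‖ < 1 := mem_ball_zero_iff.mp hz
    have hw1 : ‖w - z‖ < (1 - ‖z‖)/4 := mem_ball_iff_norm.mp hw
    have hwz : ‖w‖ ≤ ‖z‖ + ‖w - z‖ := by
      calc ‖w‖ = ‖z + (w - z)‖ := by congr 1; ring
      _ ≤ ‖z‖ + ‖w - z‖ := norm_add_le _ _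
    exact ⟨mem_ball_zero_iff.mpr (by linarith),
      mem_closedBall_zero_iff.mpr (by linarith)⟩
  -- the family as continuous maps on the ball
  have hcont : ∀ n, Continuous (fun x : ↥D => F n x) := fun n =>
    ((hdiff n).continuousOn).restrict
  set Fc : ℕ → C(↥D, ℂ) := fun n => ⟨fun x => F n x, hcont n⟩ with hFc
  -- equicontinuity
  have heqc : Equicontinuous (fun (i : ↑(Set.range Fc)) (x : ↥D) => (i : C(↥D,ℂ)) x) := by
    intro x
    rw [Metric.equicontinuousAt_iff]
    intro ε hε
    have hx1 : ‖(x:ℂ)‖ < 1 := mem_ball_zero_iff.mp x.2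
    obtain ⟨C, hC0, hC⟩ := hderiv ((1 + ‖(x:ℂ)‖)/2) (by linarith)
    have hδ0 : (0:ℝ) < (1 - ‖(x:ℂ)‖)/4 := by linarith
    refine ⟨min ((1 - ‖(x:ℂ)‖)/4) (ε/(C+1)), by positivity, ?_⟩
    intro y hy i
    obtain ⟨n, hn⟩ := i.2
    have hyx : ‖(y:ℂ) - (x:ℂ)‖ < min ((1 - ‖(x:ℂ)‖)/4) (ε/(C+1)) := by
      rw [Subtype.dist_eq, dist_eq_norm] at hy; exact hy
    have hymem : (y:ℂ) ∈ ball (x:ℂ) ((1 - ‖(x:ℂ)‖)/4) := by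
      rw [mem_ball, dist_eq_norm]
      exact lt_of_lt_of_le hyx (min_le_left _ _)
    have hxmem : (x:ℂ) ∈ ball (x:ℂ) ((1 - ‖(x:ℂ)‖)/4) := mem_ball_self hδ0
    have hmvt : ‖F n (y:ℂ) - F n (x:ℂ)‖ ≤ C * ‖(y:ℂ) - (x:ℂ)‖ := by
      refine mvt_aux (convex_ball _ _) (fun w hw => ?_) (fun w hw => ?_) hxmem hymem
      · exact (hdiff n).differentiableAt (isOpen_ball.mem_nhds (hball _ x.2 w hw).1)
      · exact hC n w (hball _ x.2 w hw).2
    have : dist ((i : C(↥D,ℂ)) y) ((i : C(↥D,ℂ)) x) = ‖F n (y:ℂ) - F n (x:ℂ)‖ := by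
      rw [← hn]; simp [Fc, dist_eq_norm]
    rw [dist_comm, this]
    calc ‖F n (y:ℂ) - F n (x:ℂ)‖ ≤ C * ‖(y:ℂ) - (x:ℂ)‖ := hmvt
    _ ≤ C * (ε/(C+1)) := by
        apply mul_le_mul_of_nonneg_left _ hC0
        exact le_of_lt (lt_of_lt_of_le hyx (min_le_right _ _))
    _ < ε := by
        rw [mul_div_assoc']
        rw [div_lt_iff₀ (by linarith)]
        nlinarith
  -- pointwise boundedness
  have hptb : ∀ x : ↥D, ∃ R : ℝ, ∀ n, ‖F n (x:ℂ)‖ ≤ R := by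
    intro x
    have hx1 : ‖(x:ℂ)‖ < 1 := mem_ball_zero_iff.mp x.2
    obtain ⟨C, hC0, hC⟩ := hderiv ((1 + ‖(x:ℂ)‖)/2) (by linarith)
    refine ⟨B + C * ‖(x:ℂ)‖, fun n => ?_⟩
    have h0mem : (0:ℂ) ∈ ball (0:ℂ) ((1 + ‖(x:ℂ)‖)/2) :=
      mem_ball_self (by positivity)
    have hxmem : (x:ℂ) ∈ ball (0:ℂ) ((1 + ‖(x:ℂ)‖)/2) :=
      mem_ball_zero_iff.mpr (by linarith)
    have hsub : ball (0:ℂ) ((1 + ‖(x:ℂ)‖)/2) ⊆ D := by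
      intro w hw
      have := mem_ball_zero_iff.mp hw
      exact mem_ball_zero_iff.mpr (by linarith)
    have hmvt : ‖F n (x:ℂ) - F n 0‖ ≤ C * ‖(x:ℂ) - 0‖ := by
      refine mvt_aux (convex_ball _ _) (fun w hw => ?_) (fun w hw => ?_) h0mem hxmem
      · exact (hdiff n).differentiableAt (isOpen_ball.mem_nhds (hsub hw))
      · exact hC n w (mem_closedBall_zero_iff.mpr (le_of_lt (mem_ball_zero_iff.mp hw)))
    calc ‖F n (x:ℂ)‖ ≤ ‖F n 0‖ + ‖F n (x:ℂ) - F n 0‖ := by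
          have := norm_add_le (F n 0) (F n (x:ℂ) - F n 0); simpa using this
    _ ≤ B + C * ‖(x:ℂ)‖ := by
        have := hmvt; rw [sub_zero] at this
        exact add_le_add (hB n) this
  -- Arzelà–Ascoli
  haveI : T2Space (UniformOnFun ↥D ℂ {K : Set ↥D | IsCompact K}) :=
    UniformOnFun.t2Space_of_covering
      (eq_univ_iff_forall.mpr fun x => ⟨{x}, isCompact_singleton, rfl⟩)
  have hcl : IsCompact (closure (Set.range Fc)) := by
    refine ArzelaAscoli.isCompact_closure_of_isClosedEmbedding
      (𝔖 := {K : Set ↥D | IsCompact K}) (fun K hK => hK)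
      ContinuousMap.isUniformEmbedding_toUniformOnFunIsCompact.isClosedEmbedding
      (fun K _ => (heqc.equicontinuousOn _)) (fun K _ x _ => ?_)
    obtain ⟨R, hR⟩ := hptb x
    refine ⟨closedBall 0 R, isCompact_closedBall _ _, fun i hi => ?_⟩
    obtain ⟨n, hn⟩ := hi
    simp only [mem_closedBall, dist_eq_norm, sub_zero, ← hn]
    exact hR n
  obtain ⟨G, -, k, hk, hconv⟩ :=
    hcl.isSeqCompact (x := fun n => Fc n) (fun n => subset_closure (mem_range_self n))
  classical
  refine ⟨fun z => if h : z ∈ D then G ⟨z, h⟩ else 0, k, hk, ?_⟩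
  rw [tendstoLocallyUniformlyOn_iff_forall_isCompact isOpen_ball]
  intro K hKD hK
  have hK' : IsCompact ((Subtype.val : ↥D → ℂ) ⁻¹' K) := by
    rw [Topology.IsEmbedding.subtypeVal.isCompact_iff]
    have : Subtype.val '' ((Subtype.val : ↥D → ℂ) ⁻¹' K) = K := by
      rw [Subtype.image_preimage_coe]
      exact inter_eq_right.mpr hKD
    rwa [this]
  rw [ContinuousMap.tendsto_iff_forall_isCompact_tendstoUniformlyOn] at hconv
  have hKu := hconv _ hK'
  rw [Metric.tendstoUniformlyOn_iff] at hKu ⊢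
  intro ε hε
  filter_upwards [hKu ε hε] with n h z hz
  have hzD : z ∈ D := hKD hz
  have := h ⟨z, hzD⟩ hz
  simpa [hzD, Fc, Function.comp] using this

/-- A closed subset `L ⊆ 𝓑_{ν,0}` is compact (sequentially, for the Bloch norm) iff it is
norm-bounded and `lim_{|z|→1⁻} sup_{f∈L} ν(z)|f'(z)| = 0`. -/
theorem stmt_12 (ν : ℂ → ℝ) (L : Set (ℂ → ℂ))
    (hνpos : ∀ z ∈ ball (0:ℂ) 1, 0 < ν z)
    (hνcont : ContinuousOn ν (ball (0:ℂ) 1))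
    (hνrad : ∀ z w : ℂ, z ∈ ball (0:ℂ) 1 → w ∈ ball (0:ℂ) 1 → ‖z‖ = ‖w‖ → ν z = ν w)
    (hL : ∀ f ∈ L, memLittleBloch ν f)
    (hclosed : ∀ (F : ℕ → ℂ → ℂ) (g : ℂ → ℂ), (∀ n, F n ∈ L) → memLittleBloch ν g →
      Filter.Tendsto (fun n => blochDist ν (F n) g) Filter.atTop (nhds 0) → g ∈ L) :
    (∀ F : ℕ → ℂ → ℂ, (∀ n, F n ∈ L) →
        ∃ g ∈ L, ∃ k : ℕ → ℕ, StrictMono k ∧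
          Filter.Tendsto (fun n => blochDist ν (F (k n)) g) Filter.atTop (nhds 0)) ↔
      ((∃ M : ℝ, ∀ f ∈ L, ‖f 0‖ + sSup ((fun z => ν z * ‖deriv f z‖) '' ball (0:ℂ) 1) ≤ M) ∧
        ∀ ε > 0, ∃ r < (1:ℝ), ∀ z ∈ ball (0:ℂ) 1, r < ‖z‖ →
          ∀ f ∈ L, ν z * ‖deriv f z‖ < ε) := by
  have hν0 : ∀ z ∈ ball (0:ℂ) 1, 0 ≤ ν z := fun z hz => (hνpos z hz).le
  -- bound for the difference family
  have hdiffbd : ∀ f ∈ L, ∀ g : ℂ → ℂ, memLittleBloch ν g → ∃ Mfg : ℝ,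
      ∀ z ∈ ball (0:ℂ) 1, ν z * ‖deriv f z - deriv g z‖ ≤ Mfg := by
    intro f hf g hg
    obtain ⟨Mf, hMf⟩ := (hL f hf).2.1
    obtain ⟨Mg, hMg⟩ := hg.2.1
    refine ⟨Mf + Mg, fun z hz => ?_⟩
    calc ν z * ‖deriv f z - deriv g z‖
        ≤ ν z * (‖deriv f z‖ + ‖deriv g z‖) :=
          mul_le_mul_of_nonneg_left (norm_sub_le _ _) (hν0 z hz)
      _ = ν z * ‖deriv f z‖ + ν z * ‖deriv g z‖ := mul_add _ _ _
      _ ≤ Mf + Mg := add_le_add (hMf z hz) (hMg z hz)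
  have hb0 : ∀ (f g : ℂ → ℂ), 0 ≤ blochDist ν f g := by
    intro f g
    exact add_nonneg (norm_nonneg _)
      (sSup_image_nonneg' fun z hz => mul_nonneg (hν0 z hz) (norm_nonneg _))
  constructor
  · -- compact → bounded and uniformly vanishing
    intro hcpt
    constructor
    · by_contra hbd
      push_neg at hbd
      choose f hfL hf using hbd
      obtain ⟨g, hgL, k, hk, hto⟩ := hcpt (fun n : ℕ => f n) (fun n => hfL _)
      set Ng := ‖g 0‖ + sSup ((fun z => ν z * ‖deriv g z‖) '' ball (0:ℂ) 1) with hNg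
      obtain ⟨Mg, hMg⟩ := (hL g hgL).2.1
      have h1 : ∀ᶠ n in atTop, blochDist ν (f (k n)) g < 1 :=
        hto.eventually_lt_const one_pos
      obtain ⟨N₁, hN₁⟩ := eventually_atTop.mp h1
      set N := max N₁ ⌈Ng + 1⌉₊ with hNdef
      have hbl : blochDist ν (f (k N)) g < 1 := hN₁ N (le_max_left _ _)
      obtain ⟨Mf, hMf⟩ := (hL _ (hfL (k N : ℕ))).2.1
      obtain ⟨Mfg, hMfg⟩ := hdiffbd _ (hfL (k N : ℕ)) g (hL g hgL)
      -- norm of f (k N) is at most Ng + blochDist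
      have key2 : sSup ((fun z => ν z * ‖deriv (f (k N)) z‖) '' ball (0:ℂ) 1) ≤
          sSup ((fun z => ν z * ‖deriv (f (k N)) z - deriv g z‖) '' ball (0:ℂ) 1) +
          sSup ((fun z => ν z * ‖deriv g z‖) '' ball (0:ℂ) 1) := by
        refine Real.sSup_le ?_ (add_nonneg
          (sSup_image_nonneg' fun z hz => mul_nonneg (hν0 z hz) (norm_nonneg _))
          (sSup_image_nonneg' fun z hz => mul_nonneg (hν0 z hz) (norm_nonneg _)))
        rintro _ ⟨w, hw, rfl⟩
        calc ν w * ‖deriv (f (k N)) w‖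
            ≤ ν w * (‖deriv (f (k N)) w - deriv g w‖ + ‖deriv g w‖) := by
              refine mul_le_mul_of_nonneg_left ?_ (hν0 w hw)
              calc ‖deriv (f (k N)) w‖
                  = ‖(deriv (f (k N)) w - deriv g w) + deriv g w‖ := by congr 1; ring
                _ ≤ _ := norm_add_le _ _
          _ = ν w * ‖deriv (f (k N)) w - deriv g w‖ + ν w * ‖deriv g w‖ := mul_add _ _ _
          _ ≤ _ := add_le_add (le_sSup_image' hMfg hw) (le_sSup_image' hMg hw)
      have key1 : ‖f (k N : ℕ) 0‖ ≤ ‖g 0‖ + ‖f (k N : ℕ) 0 - g 0‖ := by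
        calc ‖f (k N : ℕ) 0‖ = ‖g 0 + (f (k N : ℕ) 0 - g 0)‖ := by congr 1; ring
          _ ≤ _ := norm_add_le _ _
      have htot : ‖f (k N : ℕ) 0‖ +
          sSup ((fun z => ν z * ‖deriv (f (k N)) z‖) '' ball (0:ℂ) 1) <
          Ng + 1 := by
        have : blochDist ν (f (k N)) g =
            ‖f (k N : ℕ) 0 - g 0‖ +
            sSup ((fun z => ν z * ‖deriv (f (k N)) z - deriv g z‖) '' ball (0:ℂ) 1) := rfl
        rw [this] at hbl
        have h2 := key2
        rw [hNg]
        linarith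
      have hge : Ng + 1 ≤ ((k N : ℕ) : ℝ) := by
        have h3 : (N : ℝ) ≤ ((k N : ℕ) : ℝ) := by exact_mod_cast hk.le_apply
        have h4 : Ng + 1 ≤ (⌈Ng + 1⌉₊ : ℝ) := Nat.le_ceil _
        have h5 : ((⌈Ng + 1⌉₊ : ℕ) : ℝ) ≤ (N : ℝ) := by
          exact_mod_cast le_max_right N₁ ⌈Ng + 1⌉₊
        linarith
      have := hf (k N : ℕ)
      linarith
    · intro ε hε
      by_contra hvan
      push_neg at hvan
      have hsel : ∀ n : ℕ, ∃ z ∈ ball (0:ℂ) 1, (1 - 1/(n+1) : ℝ) < ‖z‖ ∧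
          ∃ f ∈ L, ε ≤ ν z * ‖deriv f z‖ := by
        intro n
        refine hvan (1 - 1/(n+1)) ?_
        have : (0:ℝ) < 1/(n+1) := by positivity
        linarith
      choose z hzball hzn f hfL hfε using hsel
      obtain ⟨g, hgL, k, hk, hto⟩ := hcpt f hfL
      obtain ⟨r₀, hr₀, hg⟩ := (hL g hgL).2.2 (ε/2) (by positivity)
      have h1 : ∀ᶠ n in atTop, blochDist ν (f (k n)) g < ε/2 :=
        hto.eventually_lt_const (by positivity)
      obtain ⟨N₁, hN₁⟩ := eventually_atTop.mp h1
      obtain ⟨n₂, hn₂⟩ := exists_nat_one_div_lt (show (0:ℝ) < 1 - r₀ by linarith)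
      set n := max N₁ n₂ with hn
      set m := k n with hm
      have hmn : n ≤ m := hk.le_apply
      have hrz : r₀ < ‖z m‖ := by
        have h5 : (1:ℝ)/(m+1) ≤ 1/(n₂+1) := by
          apply one_div_le_one_div_of_le (by positivity)
          have : (n₂ : ℝ) ≤ (m : ℝ) := by
            exact_mod_cast le_trans (le_max_right N₁ n₂) hmn
          linarith
        have := hzn m
        linarith
      have hgz : ν (z m) * ‖deriv g (z m)‖ < ε/2 := hg (z m) (hzball m) hrz
      obtain ⟨Mfg, hMfg⟩ := hdiffbd _ (hfL m) g (hL g hgL)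
      have helem : ν (z m) * ‖deriv (f m) (z m) - deriv g (z m)‖ < ε/2 := by
        have h6 : ν (z m) * ‖deriv (f m) (z m) - deriv g (z m)‖ ≤
            sSup ((fun w => ν w * ‖deriv (f m) w - deriv g w‖) '' ball (0:ℂ) 1) :=
          le_sSup_image' hMfg (hzball m)
        have h7 : sSup ((fun w => ν w * ‖deriv (f m) w - deriv g w‖) '' ball (0:ℂ) 1) ≤
            blochDist ν (f m) g := le_add_of_nonneg_left (norm_nonneg _)
        have h8 : blochDist ν (f m) g < ε/2 := hN₁ n (le_max_left _ _)
        linarith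
      have hfinal : ν (z m) * ‖deriv (f m) (z m)‖ < ε := by
        calc ν (z m) * ‖deriv (f m) (z m)‖
            ≤ ν (z m) * (‖deriv (f m) (z m) - deriv g (z m)‖ + ‖deriv g (z m)‖) := by
              refine mul_le_mul_of_nonneg_left ?_ (hν0 _ (hzball m))
              calc ‖deriv (f m) (z m)‖
                  = ‖(deriv (f m) (z m) - deriv g (z m)) + deriv g (z m)‖ := by congr 1; ring
                _ ≤ _ := norm_add_le _ _
          _ = ν (z m) * ‖deriv (f m) (z m) - deriv g (z m)‖
              + ν (z m) * ‖deriv g (z m)‖ := mul_add _ _ _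
          _ < ε/2 + ε/2 := add_lt_add helem hgz
          _ = ε := by ring
      exact absurd (hfε m) (not_le.mpr hfinal)
  · -- bounded + vanishing → sequentially compact
    rintro ⟨⟨M, hM⟩, hvan⟩ F hFL
    -- pointwise bound
    have hpt : ∀ f ∈ L, ∀ z ∈ ball (0:ℂ) 1, ν z * ‖deriv f z‖ ≤ M := by
      intro f hf z hz
      obtain ⟨Mf, hMf⟩ := (hL f hf).2.1
      have h1 := le_sSup_image' hMf hz
      have h2 := hM f hf
      have h3 := norm_nonneg (f 0)
      linarith
    have hM0 : 0 ≤ M := by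
      have h1 := hM (F 0) (hFL 0)
      have h2 := norm_nonneg (F 0 0)
      have h3 : 0 ≤ sSup ((fun z => ν z * ‖deriv (F 0) z‖) '' ball (0:ℂ) 1) :=
        sSup_image_nonneg' fun z hz => mul_nonneg (hν0 z hz) (norm_nonneg _)
      linarith
    -- derivative bounds on compact subballs
    have hderiv : ∀ ρ : ℝ, ρ < 1 → ∃ C : ℝ, 0 ≤ C ∧
        ∀ n, ∀ w ∈ closedBall (0:ℂ) ρ, ‖deriv (F n) w‖ ≤ C := by
      intro ρ hρ1
      rcases lt_or_ge ρ 0 with hρ0 | hρ0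
      · refine ⟨0, le_refl _, fun n w hw => absurd (mem_closedBall_zero_iff.mp hw) ?_⟩
        push_neg
        exact lt_of_lt_of_le hρ0 (norm_nonneg w)
      · have hsub : closedBall (0:ℂ) ρ ⊆ ball (0:ℂ) 1 := closedBall_subset_ball hρ1
        obtain ⟨w₀, hw₀K, hw₀min⟩ := (isCompact_closedBall (0:ℂ) ρ).exists_isMinOn
          ⟨0, mem_closedBall_self hρ0⟩ (hνcont.mono hsub)
        have hc : 0 < ν w₀ := hνpos w₀ (hsub hw₀K)
        refine ⟨M / ν w₀, div_nonneg hM0 hc.le, fun n w hw => ?_⟩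
        rw [le_div_iff₀ hc]
        have h1 : ν w₀ ≤ ν w := isMinOn_iff.mp hw₀min w hw
        have h2 : ν w₀ * ‖deriv (F n) w‖ ≤ ν w * ‖deriv (F n) w‖ :=
          mul_le_mul_of_nonneg_right h1 (norm_nonneg _)
        have h3 := hpt (F n) (hFL n) w (hsub hw)
        nlinarith [norm_nonneg (deriv (F n) w)]
    have hval : ∃ B : ℝ, ∀ n, ‖F n 0‖ ≤ B := by
      refine ⟨M, fun n => ?_⟩
      have h1 := hM (F n) (hFL n)
      have h3 : 0 ≤ sSup ((fun z => ν z * ‖deriv (F n) z‖) '' ball (0:ℂ) 1) :=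
        sSup_image_nonneg' fun z hz => mul_nonneg (hν0 z hz) (norm_nonneg _)
      linarith
    obtain ⟨g, k, hk, htlu⟩ := key_montel F (fun n => (hL _ (hFL n)).1) hderiv hval
    have hFdiff : ∀ᶠ n in atTop, DifferentiableOn ℂ (fun z => F (k n) z) (ball (0:ℂ) 1) :=
      Eventually.of_forall fun n => (hL _ (hFL (k n))).1
    have hgdiff : DifferentiableOn ℂ g (ball (0:ℂ) 1) :=
      htlu.differentiableOn hFdiff isOpen_ball
    have hder : TendstoLocallyUniformlyOn (deriv ∘ fun n => F (k n)) (deriv g) atTop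
        (ball (0:ℂ) 1) := htlu.deriv hFdiff isOpen_ball
    have hdptw : ∀ z ∈ ball (0:ℂ) 1,
        Tendsto (fun n => deriv (F (k n)) z) atTop (𝓝 (deriv g z)) := by
      intro z hz
      exact hder.tendsto_at hz
    have hptg : ∀ z ∈ ball (0:ℂ) 1, ν z * ‖deriv g z‖ ≤ M := by
      intro z hz
      have h1 : Tendsto (fun n => ν z * ‖deriv (F (k n)) z‖) atTop
          (𝓝 (ν z * ‖deriv g z‖)) := ((hdptw z hz).norm).const_mul _
      exact le_of_tendsto h1 (Eventually.of_forall fun n =>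
        hpt (F (k n)) (hFL (k n)) z hz)
    have hvang : ∀ ε, 0 < ε → ∃ r < (1:ℝ), ∀ z ∈ ball (0:ℂ) 1, r < ‖z‖ →
        ν z * ‖deriv g z‖ < ε := by
      intro ε hε
      obtain ⟨r, hr1, hr⟩ := hvan (ε/2) (by positivity)
      refine ⟨r, hr1, fun z hz hrz => ?_⟩
      have h1 : Tendsto (fun n => ν z * ‖deriv (F (k n)) z‖) atTop
          (𝓝 (ν z * ‖deriv g z‖)) := ((hdptw z hz).norm).const_mul _
      have h2 : ν z * ‖deriv g z‖ ≤ ε/2 := le_of_tendsto h1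
        (Eventually.of_forall fun n => (hr z hz hrz (F (k n)) (hFL (k n))).le)
      linarith
    have hgLB : memLittleBloch ν g := ⟨hgdiff, ⟨M, hptg⟩, hvang⟩
    -- convergence in Bloch distance
    have hblo : Tendsto (fun n => blochDist ν (F (k n)) g) atTop (𝓝 0) := by
      rw [Metric.tendsto_atTop]
      intro ε hε
      obtain ⟨r, hr1, hr⟩ := hvan (ε/8) (by positivity)
      set ρ := max r 0 with hρdef
      have hρ1 : ρ < 1 := max_lt hr1 one_pos
      have hρ0 : 0 ≤ ρ := le_max_right _ _
      have hKball : closedBall (0:ℂ) ρ ⊆ ball (0:ℂ) 1 := closedBall_subset_ball hρ1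
      obtain ⟨w₀, hw₀K, hw₀max⟩ := (isCompact_closedBall (0:ℂ) ρ).exists_isMaxOn
        ⟨0, mem_closedBall_self hρ0⟩ (hνcont.mono hKball)
      set Cν := ν w₀ with hCνdef
      have hCν0 : 0 ≤ Cν := hν0 w₀ (hKball hw₀K)
      have hu : TendstoUniformlyOn (deriv ∘ fun n => F (k n)) (deriv g) atTop
          (closedBall (0:ℂ) ρ) :=
        (tendstoLocallyUniformlyOn_iff_forall_isCompact isOpen_ball).mp hder _
          hKball (isCompact_closedBall _ _)
      rw [Metric.tendstoUniformlyOn_iff] at hu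
      have hu2 := hu (ε/(4*(Cν+1))) (by positivity)
      have h0 : Tendsto (fun n => F (k n) 0) atTop (𝓝 (g 0)) :=
        htlu.tendsto_at (mem_ball_self one_pos)
      have h0' : ∀ᶠ n in atTop, dist (F (k n) 0) (g 0) < ε/4 :=
        (Metric.tendsto_nhds.mp h0) (ε/4) (by positivity)
      have hgr : ∀ w ∈ ball (0:ℂ) 1, r < ‖w‖ → ν w * ‖deriv g w‖ ≤ ε/8 := by
        intro w hw hrw
        have h1 : Tendsto (fun n => ν w * ‖deriv (F (k n)) w‖) atTop
            (𝓝 (ν w * ‖deriv g w‖)) := ((hdptw w hw).norm).const_mul _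
        exact le_of_tendsto h1
          (Eventually.of_forall fun n => (hr w hw hrw (F (k n)) (hFL (k n))).le)
      obtain ⟨N₂, hN₂⟩ := eventually_atTop.mp hu2
      obtain ⟨N₃, hN₃⟩ := eventually_atTop.mp h0'
      refine ⟨max N₂ N₃, fun n hn => ?_⟩
      have hn2 : N₂ ≤ n := le_trans (le_max_left _ _) hn
      have hn3 : N₃ ≤ n := le_trans (le_max_right _ _) hn
      have hbν : blochDist ν (F (k n)) g < ε := by
        have hs : sSup ((fun w => ν w * ‖deriv (F (k n)) w - deriv g w‖) ''
            ball (0:ℂ) 1) ≤ ε/2 := by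
          refine Real.sSup_le ?_ (by positivity)
          rintro _ ⟨w, hw, rfl⟩
          rcases le_or_gt ‖w‖ ρ with hwρ | hwρ
          · have hwK : w ∈ closedBall (0:ℂ) ρ := mem_closedBall_zero_iff.mpr hwρ
            have h1 := hN₂ n hn2 w hwK
            have h2 : ‖deriv (F (k n)) w - deriv g w‖ ≤ ε/(4*(Cν+1)) := by
              rw [dist_comm, dist_eq_norm] at h1
              exact h1.le
            have h3 : ν w ≤ Cν := isMaxOn_iff.mp hw₀max w hwK
            calc ν w * ‖deriv (F (k n)) w - deriv g w‖
                ≤ Cν * (ε/(4*(Cν+1))) :=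
                  mul_le_mul h3 h2 (norm_nonneg _) hCν0
              _ ≤ ε/2 := by
                  rw [mul_div_assoc', div_le_div_iff₀ (by positivity) (by norm_num)]
                  nlinarith
          · have hrw : r < ‖w‖ := lt_of_le_of_lt (le_max_left r 0) hwρ
            have h1 : ν w * ‖deriv (F (k n)) w‖ < ε/8 :=
              hr w hw hrw (F (k n)) (hFL (k n))
            have h2 : ν w * ‖deriv g w‖ ≤ ε/8 := hgr w hw hrw
            calc ν w * ‖deriv (F (k n)) w - deriv g w‖
                ≤ ν w * (‖deriv (F (k n)) w‖ + ‖deriv g w‖) :=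
                  mul_le_mul_of_nonneg_left (norm_sub_le _ _) (hν0 w hw)
              _ = ν w * ‖deriv (F (k n)) w‖ + ν w * ‖deriv g w‖ := mul_add _ _ _
              _ ≤ ε/8 + ε/8 := add_le_add h1.le h2
              _ ≤ ε/2 := by linarith
        have h4 : ‖F (k n) 0 - g 0‖ < ε/4 := by
          have := hN₃ n hn3
          rwa [dist_eq_norm] at this
        have : blochDist ν (F (k n)) g =
            ‖F (k n) 0 - g 0‖ +
            sSup ((fun w => ν w * ‖deriv (F (k n)) w - deriv g w‖) '' ball (0:ℂ) 1) := rfl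
        rw [this]
        linarith
      rw [Real.dist_eq, sub_zero, abs_of_nonneg (hb0 _ _)]
      exact hbν
    have hgL : g ∈ L := hclosed (fun n => F (k n)) g (fun n => hFL (k n)) hgLB hblo
    exact ⟨g, hgL, k, hk, hblo⟩
end

section
/- Let φ, ψ : D → D be analytic, z₀ ∈ D, and g(z) = ((φ(z₀)-z)/(1-conj(φ(z₀))z))². Then |d/dz[(g∘φ) - (g∘ψ)](z₀)| = 2·(|ψ'(z₀)|/(1-|ψ(z₀)|²))·ρ(φ(z₀),ψ(z₀))·(1 - ρ(φ(z₀),ψ(z₀))²), where ρ is the pseudo-hyperbolic distance. -/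
set_option autoImplicit false

open Metric Complex

lemma aux_one_sub_ne (x : ℂ) (h : ‖x‖ < 1) : (1 : ℂ) - x ≠ 0 := by
  intro h0
  rw [sub_eq_zero] at h0
  simp [← h0] at h

lemma aux_normSq_identity (a b : ℂ) :
    Complex.normSq (1 - (starRingEnd ℂ) a * b) - Complex.normSq (a - b)
      = (1 - Complex.normSq a) * (1 - Complex.normSq b) := by
  simp only [Complex.normSq_apply, Complex.mul_re, Complex.mul_im, Complex.conj_re,
    Complex.conj_im, Complex.sub_re, Complex.sub_im, Complex.one_re, Complex.one_im]
  ring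

lemma aux_hasDerivAt (a b : ℂ) (hab : (1 : ℂ) - (starRingEnd ℂ) a * b ≠ 0) :
    HasDerivAt (fun w => ((a - w) / (1 - (starRingEnd ℂ) a * w)) ^ 2)
      (2 * ((a - b) / (1 - (starRingEnd ℂ) a * b)) *
        (((starRingEnd ℂ) a * a - 1) / (1 - (starRingEnd ℂ) a * b) ^ 2)) b := by
  have hu : HasDerivAt (fun w : ℂ => a - w) (-1) b := by
    simpa using HasDerivAt.const_sub a (hasDerivAt_id b)
  have hv : HasDerivAt (fun w : ℂ => 1 - (starRingEnd ℂ) a * w) (-((starRingEnd ℂ) a)) b := by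
    simpa using HasDerivAt.const_sub 1 (HasDerivAt.const_mul ((starRingEnd ℂ) a) (hasDerivAt_id b))
  have hα := hu.div hv hab
  have h2 := hα.pow 2
  refine h2.congr_deriv ?_
  simp only [Pi.div_apply]
  push_cast
  ring

/-- Test function computation for `g = α_{φ(z₀)}²`: the derivative of `g∘φ - g∘ψ` at `z₀`
has modulus `2·(|ψ'(z₀)|/(1-|ψ(z₀)|²))·ρ(φ(z₀),ψ(z₀))·(1-ρ(φ(z₀),ψ(z₀))²)`. -/
theorem stmt_14 (φ ψ : ℂ → ℂ) (z₀ : ℂ)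
    (hφ : DifferentiableOn ℂ φ (ball (0:ℂ) 1))
    (hψ : DifferentiableOn ℂ ψ (ball (0:ℂ) 1))
    (hφm : ∀ z ∈ ball (0:ℂ) 1, φ z ∈ ball (0:ℂ) 1)
    (hψm : ∀ z ∈ ball (0:ℂ) 1, ψ z ∈ ball (0:ℂ) 1)
    (hz₀ : z₀ ∈ ball (0:ℂ) 1) :
    ‖deriv (fun z =>
        ((φ z₀ - φ z) / (1 - (starRingEnd ℂ) (φ z₀) * φ z)) ^ 2 -
          ((φ z₀ - ψ z) / (1 - (starRingEnd ℂ) (φ z₀) * ψ z)) ^ 2) z₀‖ =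
      2 * (‖deriv ψ z₀‖ / (1 - ‖ψ z₀‖ ^ 2)) *
        ‖(φ z₀ - ψ z₀) / (1 - (starRingEnd ℂ) (φ z₀) * ψ z₀)‖ *
        (1 - ‖(φ z₀ - ψ z₀) / (1 - (starRingEnd ℂ) (φ z₀) * ψ z₀)‖ ^ 2) := by
  have ha : ‖φ z₀‖ < 1 := by simpa [mem_ball, dist_zero_right] using hφm z₀ hz₀
  have hb : ‖ψ z₀‖ < 1 := by simpa [mem_ball, dist_zero_right] using hψm z₀ hz₀
  set a := φ z₀ with ha_def
  set b := ψ z₀ with hb_def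
  have hda : (1 : ℂ) - (starRingEnd ℂ) a * a ≠ 0 := by
    apply aux_one_sub_ne
    rw [norm_mul]
    calc ‖(starRingEnd ℂ) a‖ * ‖a‖ ≤ 1 * ‖a‖ := by
          gcongr; simpa using ha.le
      _ < 1 := by simpa using ha
  have hdb : (1 : ℂ) - (starRingEnd ℂ) a * b ≠ 0 := by
    apply aux_one_sub_ne
    rw [norm_mul]
    calc ‖(starRingEnd ℂ) a‖ * ‖b‖ ≤ 1 * ‖b‖ := by
          gcongr; simpa using ha.le
      _ < 1 := by simpa using hb
  have hφd : HasDerivAt φ (deriv φ z₀) z₀ :=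
    (hφ.differentiableAt (isOpen_ball.mem_nhds hz₀)).hasDerivAt
  have hψd : HasDerivAt ψ (deriv ψ z₀) z₀ :=
    (hψ.differentiableAt (isOpen_ball.mem_nhds hz₀)).hasDerivAt
  have hF1 := (aux_hasDerivAt a a hda).comp z₀ hφd
  have hF2 := (aux_hasDerivAt a b hdb).comp z₀ hψd
  have hmain : HasDerivAt (fun z =>
        ((φ z₀ - φ z) / (1 - (starRingEnd ℂ) (φ z₀) * φ z)) ^ 2 -
          ((φ z₀ - ψ z) / (1 - (starRingEnd ℂ) (φ z₀) * ψ z)) ^ 2)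
      (2 * ((a - a) / (1 - (starRingEnd ℂ) a * a)) *
          (((starRingEnd ℂ) a * a - 1) / (1 - (starRingEnd ℂ) a * a) ^ 2) * deriv φ z₀ -
        2 * ((a - b) / (1 - (starRingEnd ℂ) a * b)) *
          (((starRingEnd ℂ) a * a - 1) / (1 - (starRingEnd ℂ) a * b) ^ 2) * deriv ψ z₀) z₀ :=
    hF1.sub hF2
  rw [hmain.deriv]
  simp only [sub_self, zero_div, mul_zero, zero_mul, zero_sub, norm_neg]
  -- compute the norm
  have hnum : ‖(starRingEnd ℂ) a * a - 1‖ = 1 - ‖a‖ ^ 2 := by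
    have h1 : (starRingEnd ℂ) a * a - 1 = (((normSq a : ℝ) - 1 : ℝ) : ℂ) := by
      push_cast
      rw [← Complex.normSq_eq_conj_mul_self]
    rw [h1, Complex.norm_real, ← Complex.sq_norm, Real.norm_eq_abs,
      abs_of_nonpos (by nlinarith [norm_nonneg a, ha])]
    ring
  rw [norm_mul, norm_mul, norm_mul, norm_div, norm_div, norm_pow, hnum]
  have h2 : ‖(2 : ℂ)‖ = 2 := by norm_num
  rw [h2]
  set r := ‖a - b‖
  set d := ‖(1:ℂ) - (starRingEnd ℂ) a * b‖
  set s := ‖a‖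
  set t := ‖b‖
  set k := ‖deriv ψ z₀‖
  have hd0 : 0 < d := norm_pos_iff.mpr hdb
  have ht0 : (0:ℝ) < 1 - t ^ 2 := by nlinarith [norm_nonneg b]
  have hkey : d ^ 2 - r ^ 2 = (1 - s ^ 2) * (1 - t ^ 2) := by
    have := aux_normSq_identity a b
    simp only [← Complex.sq_norm] at this
    convert this using 2
  have hrd : 1 - (r / d) ^ 2 = (1 - s ^ 2) * (1 - t ^ 2) / d ^ 2 := by
    rw [← hkey]
    field_simp
  rw [hrd]
  field_simp
end

section
/- Let ν be a positive weight on D and φ, ψ analytic self-maps of D. Then for all z ∈ D: ν(z)|φ'(z) - ψ'(z)| ≤ 2·|ν(z)φ'(z)/(1-|φ(z)|²) - ν(z)ψ'(z)/(1-|ψ(z)|²)| + 4·ρ(φ(z),ψ(z))·ν(z)|φ'(z)|/(1-|φ(z)|²), where ρ is the pseudo-hyperbolic distance. -/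
set_option autoImplicit false

open Metric Complex

/-- Pointwise estimate of `ν|φ'-ψ'|` by the two quantities controlling the difference
of composition operators. -/
theorem stmt_15 (φ ψ : ℂ → ℂ) (ν : ℂ → ℝ)
    (hφ : DifferentiableOn ℂ φ (ball (0:ℂ) 1))
    (hψ : DifferentiableOn ℂ ψ (ball (0:ℂ) 1))
    (hφm : ∀ z ∈ ball (0:ℂ) 1, φ z ∈ ball (0:ℂ) 1)
    (hψm : ∀ z ∈ ball (0:ℂ) 1, ψ z ∈ ball (0:ℂ) 1)
    (hν : ∀ z ∈ ball (0:ℂ) 1, 0 < ν z) :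
    ∀ z ∈ ball (0:ℂ) 1,
      ν z * ‖deriv φ z - deriv ψ z‖ ≤
        2 * ‖((ν z : ℝ) : ℂ) * deriv φ z / ((1 - ‖φ z‖ ^ 2 : ℝ) : ℂ) -
              ((ν z : ℝ) : ℂ) * deriv ψ z / ((1 - ‖ψ z‖ ^ 2 : ℝ) : ℂ)‖ +
          4 * ‖(φ z - ψ z) / (1 - (starRingEnd ℂ) (ψ z) * φ z)‖ *
            (ν z * ‖deriv φ z‖ / (1 - ‖φ z‖ ^ 2)) := by
  intro z hz
  have ha : ‖φ z‖ < 1 := by simpa [mem_ball, dist_zero_right] using hφm z hz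
  have hb : ‖ψ z‖ < 1 := by simpa [mem_ball, dist_zero_right] using hψm z hz
  set a := φ z with ha'
  set b := ψ z with hb'
  set A := deriv φ z with hA'
  set B := deriv ψ z with hB'
  set n := ν z with hn'
  have hn : 0 < n := hν z hz
  have hda : (0:ℝ) < 1 - ‖a‖^2 := by nlinarith [norm_nonneg a]
  have hdb : (0:ℝ) < 1 - ‖b‖^2 := by nlinarith [norm_nonneg b]
  have hdac : ((1 - ‖a‖^2 : ℝ) : ℂ) ≠ 0 := by exact_mod_cast hda.ne'
  have hdbc : ((1 - ‖b‖^2 : ℝ) : ℂ) ≠ 0 := by exact_mod_cast hdb.ne'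
  have hba : ‖(starRingEnd ℂ) b * a‖ < 1 := by
    rw [norm_mul, RCLike.norm_conj]
    nlinarith [norm_nonneg a, norm_nonneg b]
  have hden : (1 - (starRingEnd ℂ) b * a) ≠ 0 := by
    intro h
    rw [sub_eq_zero] at h
    rw [← h, norm_one] at hba
    exact lt_irrefl 1 hba
  set ρr := ‖(a - b) / (1 - (starRingEnd ℂ) b * a)‖ with hρ
  have hρ0 : 0 ≤ ρr := norm_nonneg _
  have hab : ‖a - b‖ ≤ 2 * ρr := by
    have hfac : a - b = ((a - b) / (1 - (starRingEnd ℂ) b * a)) * (1 - (starRingEnd ℂ) b * a) := by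
      rw [div_mul_cancel₀ _ hden]
    calc ‖a - b‖ = ρr * ‖1 - (starRingEnd ℂ) b * a‖ := by rw [hρ, ← norm_mul, ← hfac]
      _ ≤ ρr * 2 := by
          apply mul_le_mul_of_nonneg_left _ hρ0
          calc ‖1 - (starRingEnd ℂ) b * a‖ ≤ ‖(1:ℂ)‖ + ‖(starRingEnd ℂ) b * a‖ := norm_sub_le _ _
            _ ≤ 1 + 1 := by rw [norm_one]; linarith [hba.le]
            _ = 2 := by norm_num
      _ = 2 * ρr := mul_comm _ _
  have hsq : |‖b‖^2 - ‖a‖^2| ≤ 4 * ρr := by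
    have h1 : |‖a‖ - ‖b‖| ≤ ‖a - b‖ := abs_norm_sub_norm_le a b
    obtain ⟨hl, hr⟩ := abs_le.mp h1
    rw [abs_le]
    constructor <;> nlinarith [norm_nonneg a, norm_nonneg b, norm_nonneg (a - b)]
  have key : (n:ℂ) * (A - B) =
      ((1 - ‖b‖^2 : ℝ) : ℂ) * ((n:ℂ) * A / ((1 - ‖a‖^2 : ℝ) : ℂ) - (n:ℂ) * B / ((1 - ‖b‖^2 : ℝ) : ℂ))
      + ((‖b‖^2 - ‖a‖^2 : ℝ) : ℂ) * ((n:ℂ) * A / ((1 - ‖a‖^2 : ℝ) : ℂ)) := by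
    have hdac2 := hdac
    have hdbc2 := hdbc
    push_cast at hdac2 hdbc2
    push_cast
    field_simp [hdac2, hdbc2]
    ring
  have hnormA : ‖(n:ℂ) * A / ((1 - ‖a‖^2 : ℝ) : ℂ)‖ = n * ‖A‖ / (1 - ‖a‖^2) := by
    rw [norm_div, norm_mul, Complex.norm_real, Complex.norm_real,
      Real.norm_of_nonneg hn.le, Real.norm_of_nonneg hda.le]
  have step : n * ‖A - B‖ = ‖(n:ℂ) * (A - B)‖ := by
    rw [norm_mul, Complex.norm_real, Real.norm_of_nonneg hn.le]
  rw [step, key]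
  calc ‖((1 - ‖b‖^2 : ℝ) : ℂ) * ((n:ℂ) * A / ((1 - ‖a‖^2 : ℝ) : ℂ) - (n:ℂ) * B / ((1 - ‖b‖^2 : ℝ) : ℂ))
      + ((‖b‖^2 - ‖a‖^2 : ℝ) : ℂ) * ((n:ℂ) * A / ((1 - ‖a‖^2 : ℝ) : ℂ))‖
      ≤ ‖((1 - ‖b‖^2 : ℝ) : ℂ) * ((n:ℂ) * A / ((1 - ‖a‖^2 : ℝ) : ℂ) - (n:ℂ) * B / ((1 - ‖b‖^2 : ℝ) : ℂ))‖
        + ‖((‖b‖^2 - ‖a‖^2 : ℝ) : ℂ) * ((n:ℂ) * A / ((1 - ‖a‖^2 : ℝ) : ℂ))‖ := norm_add_le _ _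
    _ = (1 - ‖b‖^2) * ‖(n:ℂ) * A / ((1 - ‖a‖^2 : ℝ) : ℂ) - (n:ℂ) * B / ((1 - ‖b‖^2 : ℝ) : ℂ)‖
        + |‖b‖^2 - ‖a‖^2| * (n * ‖A‖ / (1 - ‖a‖^2)) := by
        rw [norm_mul, norm_mul, Complex.norm_real, Complex.norm_real,
          Real.norm_of_nonneg hdb.le, Real.norm_eq_abs, hnormA]
    _ ≤ 2 * ‖(n:ℂ) * A / ((1 - ‖a‖^2 : ℝ) : ℂ) - (n:ℂ) * B / ((1 - ‖b‖^2 : ℝ) : ℂ)‖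
        + 4 * ρr * (n * ‖A‖ / (1 - ‖a‖^2)) := by
        have hX : (0:ℝ) ≤ ‖(n:ℂ) * A / ((1 - ‖a‖^2 : ℝ) : ℂ) - (n:ℂ) * B / ((1 - ‖b‖^2 : ℝ) : ℂ)‖ :=
          norm_nonneg _
        have hY : (0:ℝ) ≤ n * ‖A‖ / (1 - ‖a‖^2) := by positivity
        gcongr <;> first
          | linarith [sq_nonneg ‖b‖]
          | exact hsq
end

section
/- Let 1 < p < ∞, ν a positive weight on D, and φ, ψ analytic self-maps of D. There exists C > 0 such that for every f in the unit ball of B^p and every z ∈ D: ν(z)|f'(φ(z))φ'(z) - f'(ψ(z))ψ'(z)| ≤ C·[ |ν(z)φ'(z)/(1-|φ(z)|²) - ν(z)ψ'(z)/(1-|ψ(z)|²)| + (ν(z)|ψ'(z)|/(1-|ψ(z)|²))·ρ(φ(z),ψ(z)) ]. -/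
set_option autoImplicit false

open MeasureTheory Metric Complex

set_option maxHeartbeats 1000000


lemma circle_mean {g : ℂ → ℂ} {w : ℂ} {s : ℝ} (hs : 0 < s)
    (hg : DiffContOnCl ℂ g (ball w s)) :
    2 * Real.pi * ‖g w‖ ≤ ∫ θ in (0:ℝ)..(2*Real.pi), ‖g (circleMap w s θ)‖ := by
  have hC := hg.circleIntegral_sub_inv_smul (mem_ball_self hs)
  have h1 : ‖(2 * Real.pi * I : ℂ) • g w‖ = 2 * Real.pi * ‖g w‖ := by
    simp [norm_smul, Complex.norm_real, abs_of_pos Real.pi_pos, mul_assoc]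
  calc 2 * Real.pi * ‖g w‖ = ‖(2 * Real.pi * I : ℂ) • g w‖ := h1.symm
    _ = ‖∮ z in C(w, s), (z - w)⁻¹ • g z‖ := by rw [hC]
    _ ≤ ∫ θ in (0:ℝ)..(2*Real.pi), ‖deriv (circleMap w s) θ • (circleMap w s θ - w)⁻¹ • g (circleMap w s θ)‖ := by
        apply intervalIntegral.norm_integral_le_integral_norm
        positivity
    _ = ∫ θ in (0:ℝ)..(2*Real.pi), ‖g (circleMap w s θ)‖ := by
        apply intervalIntegral.integral_congr
        intro θ _
        have h2 : circleMap w s θ - w = circleMap 0 s θ := circleMap_sub_center w s θ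
        simp [norm_smul, deriv_circleMap, h2, norm_circleMap_zero, abs_of_pos hs]
        field_simp

lemma submean {g : ℂ → ℂ} {w : ℂ} {r : ℝ} (hr : 0 < r)
    (hg : DifferentiableOn ℂ g (ball (0:ℂ) 1))
    (hsub : closedBall w r ⊆ ball (0:ℂ) 1) :
    Real.pi * r ^ 2 * ‖g w‖ ≤ ∫ z in ball w r, ‖g z‖ := by
  have hc : ContinuousOn g (closedBall w r) := hg.continuousOn.mono hsub
  set F : ℂ → ℝ := (ball w r).indicator (fun z => ‖g z‖) with hF
  have key : ∀ p : ℝ × ℝ, w + Complex.polarCoord.symm p = circleMap w p.1 p.2 := by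
    intro p
    simp [circleMap, Complex.polarCoord_symm_apply, Complex.exp_mul_I,
      ← Complex.ofReal_cos, ← Complex.ofReal_sin]
  set S : Set (ℝ × ℝ) := Set.Ioo (0:ℝ) r ×ˢ Set.Ioo (-Real.pi) Real.pi with hS
  set K : ℝ × ℝ → ℝ := fun p => p.1 * ‖g (circleMap w p.1 p.2)‖ with hK
  -- continuity of K on compact rectangle
  have hcm : Continuous (fun p : ℝ × ℝ => circleMap w p.1 p.2) := by
    unfold circleMap
    fun_prop
  have hKcont : ContinuousOn K (Set.Icc (0:ℝ) r ×ˢ Set.Icc (-Real.pi) Real.pi) := by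
    apply ContinuousOn.mul continuousOn_fst
    apply ContinuousOn.norm
    apply hc.comp hcm.continuousOn
    intro p hp
    simp only [mem_closedBall, dist_eq_norm]
    have : circleMap w p.1 p.2 - w = circleMap 0 p.1 p.2 := circleMap_sub_center _ _ _
    rw [this]
    simpa [_root_.abs_of_nonneg hp.1.1] using hp.1.2
  have hKint : IntegrableOn K S := by
    apply (hKcont.integrableOn_compact (isCompact_Icc.prod isCompact_Icc)).mono_set
    exact Set.prod_mono Set.Ioo_subset_Icc_self Set.Ioo_subset_Icc_self
  -- chain of equalities
  have e1 : ∫ z in ball w r, ‖g z‖ = ∫ z, F z := (integral_indicator measurableSet_ball).symm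
  have e2 : ∫ z, F z = ∫ z, F (w + z) := (integral_add_left_eq_self F w).symm
  have e3 : ∫ z, F (w + z) = ∫ p in polarCoord.target, p.1 • F (circleMap w p.1 p.2) := by
    rw [← Complex.integral_comp_polarCoord_symm (fun z => F (w + z))]
    simp_rw [key]
  have e4 : ∫ p in polarCoord.target, p.1 • F (circleMap w p.1 p.2) = ∫ p in S, p.1 • F (circleMap w p.1 p.2) := by
    apply setIntegral_eq_of_subset_of_forall_diff_eq_zero polarCoord.open_target.measurableSet
    · intro p hp
      rw [polarCoord_target]
      exact ⟨Set.mem_Ioi.2 hp.1.1, hp.2⟩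
    · intro p hp
      obtain ⟨hpt, hps⟩ := hp
      rw [polarCoord_target] at hpt
      have h1 : ¬ p.1 < r := by
        intro hlt
        exact hps ⟨⟨hpt.1, hlt⟩, hpt.2⟩
      have : circleMap w p.1 p.2 ∉ ball w r := by
        simp only [mem_ball, dist_eq_norm]
        have h2 : circleMap w p.1 p.2 - w = circleMap 0 p.1 p.2 := circleMap_sub_center _ _ _
        rw [h2]
        simp only [norm_circleMap_zero]
        rw [abs_of_pos hpt.1]
        exact fun hh => h1 hh
      rw [hF, Set.indicator_of_notMem this]
      simp
  have e5 : ∫ p in S, p.1 • F (circleMap w p.1 p.2) = ∫ p in S, K p := by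
    apply setIntegral_congr_fun (by measurability)
    intro p hp
    have : circleMap w p.1 p.2 ∈ ball w r := by
      simp only [mem_ball, dist_eq_norm]
      have h2 : circleMap w p.1 p.2 - w = circleMap 0 p.1 p.2 := circleMap_sub_center _ _ _
      rw [h2]
      simp only [norm_circleMap_zero]
      rw [abs_of_pos hp.1.1]
      exact hp.1.2
    rw [hF]
    simp only [Set.indicator_of_mem this, smul_eq_mul, hK]
  have hKint' : IntegrableOn K S ((volume : Measure ℝ).prod volume) := by
    rwa [← Measure.volume_eq_prod]
  have e6 : ∫ p in S, K p = ∫ s in Set.Ioo (0:ℝ) r, ∫ θ in Set.Ioo (-Real.pi) Real.pi, K (s, θ) := by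
    have h := setIntegral_prod (μ := (volume : Measure ℝ)) (ν := (volume : Measure ℝ))
      (s := Set.Ioo (0:ℝ) r) (t := Set.Ioo (-Real.pi) Real.pi) K hKint'
    rw [← Measure.volume_eq_prod] at h
    exact h
  -- per-slice lower bound
  have inner : ∀ s ∈ Set.Ioo (0:ℝ) r,
      s * (2 * Real.pi * ‖g w‖) ≤ ∫ θ in Set.Ioo (-Real.pi) Real.pi, K (s, θ) := by
    intro s hs
    have hdc : DiffContOnCl ℂ g (ball w s) := by
      constructor
      · exact hg.mono ((ball_subset_ball hs.2.le).trans ((ball_subset_closedBall).trans hsub))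
      · exact (hg.continuousOn).mono ((closure_ball_subset_closedBall).trans
          ((closedBall_subset_closedBall hs.2.le).trans hsub))
    have hper : Function.Periodic (fun θ => ‖g (circleMap w s θ)‖) (2 * Real.pi) := by
      intro θ
      simp [periodic_circleMap w s θ]
    have hcirc := circle_mean hs.1 hdc
    have eper : ∫ θ in (-Real.pi)..Real.pi, ‖g (circleMap w s θ)‖
        = ∫ θ in (0:ℝ)..(2*Real.pi), ‖g (circleMap w s θ)‖ := by
      have h0 := hper.intervalIntegral_add_eq (-Real.pi) 0
      rw [show -Real.pi + 2 * Real.pi = Real.pi by ring, zero_add] at h0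
      exact h0
    have eset : ∫ θ in Set.Ioo (-Real.pi) Real.pi, ‖g (circleMap w s θ)‖
        = ∫ θ in (-Real.pi)..Real.pi, ‖g (circleMap w s θ)‖ := by
      rw [intervalIntegral.integral_of_le (by linarith [Real.pi_pos]), integral_Ioc_eq_integral_Ioo]
    have : 2 * Real.pi * ‖g w‖ ≤ ∫ θ in Set.Ioo (-Real.pi) Real.pi, ‖g (circleMap w s θ)‖ := by
      rw [eset, eper]; exact hcirc
    calc s * (2 * Real.pi * ‖g w‖) ≤ s * ∫ θ in Set.Ioo (-Real.pi) Real.pi, ‖g (circleMap w s θ)‖ :=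
          mul_le_mul_of_nonneg_left this hs.1.le
      _ = ∫ θ in Set.Ioo (-Real.pi) Real.pi, K (s, θ) := by
          rw [← integral_const_mul]
  -- outer integration
  have houter : IntegrableOn (fun s => ∫ θ in Set.Ioo (-Real.pi) Real.pi, K (s, θ)) (Set.Ioo (0:ℝ) r) := by
    have h : Integrable K (((volume : Measure ℝ).restrict (Set.Ioo (0:ℝ) r)).prod
        ((volume : Measure ℝ).restrict (Set.Ioo (-Real.pi) Real.pi))) := by
      rw [Measure.prod_restrict, ← Measure.volume_eq_prod]
      exact hKint
    exact h.integral_prod_left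
  have hlin : IntegrableOn (fun s : ℝ => s * (2 * Real.pi * ‖g w‖)) (Set.Ioo (0:ℝ) r) := by
    apply Integrable.mono_measure _ (Measure.restrict_mono Set.Ioo_subset_Icc_self le_rfl)
    exact (continuous_id.mul continuous_const).continuousOn.integrableOn_compact isCompact_Icc
  have hmono : ∫ s in Set.Ioo (0:ℝ) r, s * (2 * Real.pi * ‖g w‖)
      ≤ ∫ s in Set.Ioo (0:ℝ) r, ∫ θ in Set.Ioo (-Real.pi) Real.pi, K (s, θ) :=
    setIntegral_mono_on hlin houter measurableSet_Ioo inner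
  have hval : ∫ s in Set.Ioo (0:ℝ) r, s * (2 * Real.pi * ‖g w‖) = Real.pi * r ^ 2 * ‖g w‖ := by
    rw [integral_mul_const]
    have : ∫ s in Set.Ioo (0:ℝ) r, s = r ^ 2 / 2 := by
      rw [← integral_Ioc_eq_integral_Ioo, ← intervalIntegral.integral_of_le hr.le]
      simp [integral_id]
    rw [this]
    ring
  rw [e1, e2, e3, e4, e5, e6, ← hval]
  exact hmono
lemma lemA {p : ℝ} (hp : 1 < p) {f : ℂ → ℂ} (hf : DifferentiableOn ℂ f (ball (0:ℂ) 1))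
    (hint : IntegrableOn (fun z : ℂ => ‖deriv f z‖ ^ p * (1 - ‖z‖ ^ 2) ^ (p - 2)) (ball (0:ℂ) 1))
    (hnorm : ∫ z in ball (0:ℂ) 1, ‖deriv f z‖ ^ p * (1 - ‖z‖ ^ 2) ^ (p - 2) ≤ Real.pi) :
    ∀ w ∈ ball (0:ℂ) 1, (1 - ‖w‖ ^ 2) * ‖deriv f w‖ ≤ 24 := by
  have hp0 : (0:ℝ) < p := by linarith
  have hg : DifferentiableOn ℂ (deriv f) (ball (0:ℂ) 1) :=
    ((hf.analyticOnNhd isOpen_ball).deriv).differentiableOn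
  intro w hw
  rw [mem_ball, dist_zero_right] at hw
  set r : ℝ := (1 - ‖w‖) / 2 with hrdef
  have hr : 0 < r := by
    have := norm_nonneg w
    simp only [hrdef]
    linarith
  have hsub : closedBall w r ⊆ ball (0:ℂ) 1 := by
    intro z hz
    rw [mem_closedBall, dist_eq_norm] at hz
    rw [mem_ball, dist_zero_right]
    have : ‖z‖ ≤ ‖w‖ + r := by
      calc ‖z‖ = ‖w + (z - w)‖ := by ring_nf
        _ ≤ ‖w‖ + ‖z - w‖ := norm_add_le _ _
        _ ≤ ‖w‖ + r := by linarith
    simp only [hrdef] at this ⊢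
    linarith
  -- bounds on the weight on closedBall w r
  have hwt : ∀ z ∈ closedBall w r, r ≤ 1 - ‖z‖ ^ 2 ∧ 1 - ‖z‖ ^ 2 ≤ 6 * r := by
    intro z hz
    rw [mem_closedBall, dist_eq_norm] at hz
    have hz1 : ‖z‖ < 1 := by
      have := mem_ball.1 (hsub (mem_closedBall.2 (by rwa [dist_eq_norm])))
      rwa [dist_zero_right] at this
    have hzn : 0 ≤ ‖z‖ := norm_nonneg z
    have h1 : ‖z‖ ≤ ‖w‖ + r := by
      calc ‖z‖ = ‖w + (z - w)‖ := by ring_nf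
        _ ≤ ‖w‖ + ‖z - w‖ := norm_add_le _ _
        _ ≤ ‖w‖ + r := by linarith
    have h2 : ‖w‖ ≤ ‖z‖ + r := by
      calc ‖w‖ = ‖z + (w - z)‖ := by ring_nf
        _ ≤ ‖z‖ + ‖w - z‖ := norm_add_le _ _
        _ ≤ ‖z‖ + r := by rw [← norm_neg (z - w)] at hz; simpa [neg_sub] using hz
    constructor
    · nlinarith [sq_nonneg (‖z‖ : ℝ), sq_nonneg (1 - ‖z‖)]
    · nlinarith
  -- key pointwise weight inequality
  have hpw : ∀ z ∈ closedBall w r, (1:ℝ) ≤ 6 * r ^ (2 - p) * (1 - ‖z‖ ^ 2) ^ (p - 2) := by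
    intro z hz
    obtain ⟨hl, hu⟩ := hwt z hz
    have ht0 : (0:ℝ) < 1 - ‖z‖ ^ 2 := lt_of_lt_of_le hr hl
    rcases le_or_gt 2 p with hp2 | hp2
    · have : r ^ (p - 2) ≤ (1 - ‖z‖ ^ 2) ^ (p - 2) :=
        Real.rpow_le_rpow hr.le hl (by linarith)
      calc (1:ℝ) = 1 * (r ^ (2 - p) * r ^ (p - 2)) := by
            rw [← Real.rpow_add hr]; norm_num
        _ ≤ 6 * (r ^ (2 - p) * (1 - ‖z‖ ^ 2) ^ (p - 2)) := by
            have h6 : (0:ℝ) < r ^ (2 - p) := Real.rpow_pos_of_pos hr _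
            have h7 := mul_le_mul_of_nonneg_left this h6.le
            have h8 := mul_pos h6 (Real.rpow_pos_of_pos hr (p - 2))
            nlinarith
        _ = 6 * r ^ (2 - p) * (1 - ‖z‖ ^ 2) ^ (p - 2) := by ring
    · have h6r : (1 - ‖z‖ ^ 2) ≤ 6 * r := hu
      have : (6 * r) ^ (p - 2) ≤ (1 - ‖z‖ ^ 2) ^ (p - 2) :=
        Real.rpow_le_rpow_of_nonpos ht0 hu (by linarith)
      have hmul : (6 * r) ^ (p - 2) = 6 ^ (p - 2) * r ^ (p - 2) :=
        Real.mul_rpow (by norm_num) hr.le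
      have h61 : 6 ^ (p - 1 : ℝ) ≥ (1:ℝ) := by
        apply Real.one_le_rpow (by norm_num) (by linarith)
      calc (1:ℝ) ≤ 6 ^ (p - 1 : ℝ) := h61
        _ = 6 * (6 : ℝ) ^ (p - 2) := by
            rw [show (p - 1 : ℝ) = 1 + (p - 2) by ring, Real.rpow_add (by norm_num : (0:ℝ) < 6),
              Real.rpow_one]
        _ = 6 * (6 : ℝ) ^ (p - 2) * (r ^ (2 - p) * r ^ (p - 2)) := by
            rw [← Real.rpow_add hr]; norm_num
        _ = 6 * r ^ (2 - p) * ((6:ℝ) ^ (p - 2) * r ^ (p - 2)) := by ring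
        _ ≤ 6 * r ^ (2 - p) * (1 - ‖z‖ ^ 2) ^ (p - 2) := by
            apply mul_le_mul_of_nonneg_left
            · rw [← hmul]; exact this
            · positivity
  -- continuity facts
  have hsub' : ball w r ⊆ ball (0:ℂ) 1 := ball_subset_closedBall.trans hsub
  have hgc : ContinuousOn (deriv f) (closedBall w r) := hg.continuousOn.mono hsub
  have hgcp : ContinuousOn (fun z => ‖deriv f z‖ ^ p) (closedBall w r) :=
    (hgc.norm).rpow_const (fun z _ => Or.inr hp0.le)
  have hA : IntegrableOn (fun z => ‖deriv f z‖ ^ p) (ball w r) :=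
    (hgcp.integrableOn_compact (isCompact_closedBall w r)).mono_set ball_subset_closedBall
  have hvol : (volume (ball w r)).toReal = Real.pi * r ^ 2 := by
    rw [Complex.volume_ball]
    rw [ENNReal.toReal_mul, ENNReal.toReal_pow, ENNReal.toReal_ofReal hr.le]
    simp [mul_comm]
  haveI hfin : IsFiniteMeasure (volume.restrict (ball w r)) := by
    constructor
    rw [Measure.restrict_apply_univ]
    exact measure_ball_lt_top
  -- Hölder
  obtain ⟨M, hM⟩ := (isCompact_closedBall w r).exists_bound_of_continuousOn hgc
  have hmeas : AEStronglyMeasurable (fun z => ‖deriv f z‖) (volume.restrict (ball w r)) :=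
    ((hgc.mono ball_subset_closedBall).aestronglyMeasurable measurableSet_ball).norm
  have hmemf : MemLp (fun z => ‖deriv f z‖) (ENNReal.ofReal p) (volume.restrict (ball w r)) := by
    apply MemLp.of_bound hmeas M
    rw [ae_restrict_iff' measurableSet_ball]
    exact ae_of_all _ fun z hz => by
      simpa using hM z (ball_subset_closedBall hz)
  have hpq : p.HolderConjugate (p / (p - 1)) := Real.HolderConjugate.conjExponent hp
  have hhold := integral_mul_le_Lp_mul_Lq_of_nonneg (μ := volume.restrict (ball w r)) hpq
    (ae_of_all _ fun z => norm_nonneg (deriv f z))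
    (ae_of_all _ fun _ => zero_le_one)
    hmemf (memLp_const 1)
  simp only [mul_one, Real.one_rpow, integral_const, smul_eq_mul] at hhold
  rw [Measure.real, Measure.restrict_apply_univ, hvol] at hhold
  have hexp : 1 / (p / (p - 1)) = 1 - 1 / p := by
    field_simp
  rw [hexp] at hhold
  -- integral comparison
  have hI2 : ∫ z in ball w r, ‖deriv f z‖ ^ p ≤ 6 * r ^ (2 - p) * Real.pi := by
    have hintr : IntegrableOn (fun z : ℂ => ‖deriv f z‖ ^ p * (1 - ‖z‖ ^ 2) ^ (p - 2)) (ball w r) :=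
      hint.mono_set hsub'
    have step1 : ∫ z in ball w r, ‖deriv f z‖ ^ p
        ≤ ∫ z in ball w r, 6 * r ^ (2 - p) * (‖deriv f z‖ ^ p * (1 - ‖z‖ ^ 2) ^ (p - 2)) := by
      apply setIntegral_mono_on hA (hintr.const_mul _) measurableSet_ball
      intro z hz
      have h1 := hpw z (ball_subset_closedBall hz)
      have h2 : (0:ℝ) ≤ ‖deriv f z‖ ^ p := Real.rpow_nonneg (norm_nonneg _) _
      nlinarith
    have hnn : 0 ≤ᵐ[volume.restrict (ball (0:ℂ) 1)]
        fun z : ℂ => ‖deriv f z‖ ^ p * (1 - ‖z‖ ^ 2) ^ (p - 2) := by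
      filter_upwards [ae_restrict_mem measurableSet_ball] with z hz
      simp only [Pi.zero_apply]
      have h2 : (0:ℝ) ≤ ‖deriv f z‖ ^ p := Real.rpow_nonneg (norm_nonneg _) _
      have h3 : (0:ℝ) ≤ (1 - ‖z‖ ^ 2) ^ (p - 2) := by
        apply Real.rpow_nonneg
        rw [mem_ball, dist_zero_right] at hz
        nlinarith [norm_nonneg z]
      exact mul_nonneg h2 h3
    have step2 : ∫ z in ball w r, ‖deriv f z‖ ^ p * (1 - ‖z‖ ^ 2) ^ (p - 2)
        ≤ ∫ z in ball (0:ℂ) 1, ‖deriv f z‖ ^ p * (1 - ‖z‖ ^ 2) ^ (p - 2) :=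
      setIntegral_mono_set hint hnn hsub'.eventuallyLE
    calc ∫ z in ball w r, ‖deriv f z‖ ^ p
        ≤ ∫ z in ball w r, 6 * r ^ (2 - p) * (‖deriv f z‖ ^ p * (1 - ‖z‖ ^ 2) ^ (p - 2)) := step1
      _ = 6 * r ^ (2 - p) * ∫ z in ball w r, ‖deriv f z‖ ^ p * (1 - ‖z‖ ^ 2) ^ (p - 2) :=
          integral_const_mul _ _
      _ ≤ 6 * r ^ (2 - p) * ∫ z in ball (0:ℂ) 1, ‖deriv f z‖ ^ p * (1 - ‖z‖ ^ 2) ^ (p - 2) := by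
          apply mul_le_mul_of_nonneg_left step2
          positivity
      _ ≤ 6 * r ^ (2 - p) * Real.pi := by
          apply mul_le_mul_of_nonneg_left hnorm
          positivity
  -- assemble
  set A : ℝ := ∫ z in ball w r, ‖deriv f z‖ ^ p with hAdef
  have hA0 : 0 ≤ A := by
    apply setIntegral_nonneg measurableSet_ball
    intro z _
    exact Real.rpow_nonneg (norm_nonneg _) _
  have hmean := submean hr hg hsub
  have hV : (0:ℝ) < Real.pi * r ^ 2 := by positivity
  have hchain : Real.pi * r ^ 2 * ‖deriv f w‖ ≤ A ^ (1/p) * (Real.pi * r ^ 2) ^ (1 - 1/p) :=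
    le_trans hmean (le_trans hhold (by rfl))
  have hgw : ‖deriv f w‖ ≤ A ^ (1/p) * (Real.pi * r ^ 2) ^ (-(1/p)) := by
    have hpow : (Real.pi * r ^ 2) ^ (1 - 1/p) = (Real.pi * r ^ 2) * (Real.pi * r ^ 2) ^ (-(1/p)) := by
      rw [show (1 - 1/p : ℝ) = 1 + (-(1/p)) by ring, Real.rpow_add hV, Real.rpow_one]
    rw [hpow] at hchain
    have := (mul_le_mul_iff_right₀ hV).1 (by linarith [hchain] : Real.pi * r ^ 2 * ‖deriv f w‖
      ≤ Real.pi * r ^ 2 * (A ^ (1/p) * (Real.pi * r ^ 2) ^ (-(1/p))))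
    exact this
  have hgwp : ‖deriv f w‖ ^ p ≤ A / (Real.pi * r ^ 2) := by
    have h1 : (A ^ (1/p) * (Real.pi * r ^ 2) ^ (-(1/p))) ^ p
        = A * (Real.pi * r ^ 2)⁻¹ := by
      rw [Real.mul_rpow (Real.rpow_nonneg hA0 _) (Real.rpow_nonneg hV.le _),
        ← Real.rpow_mul hA0, ← Real.rpow_mul hV.le,
        one_div, inv_mul_cancel₀ (ne_of_gt hp0), Real.rpow_one,
        show (-(p⁻¹) * p : ℝ) = -1 by field_simp, Real.rpow_neg_one]
    have h2 := Real.rpow_le_rpow (norm_nonneg _) hgw hp0.le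
    rw [h1] at h2
    simpa [div_eq_mul_inv] using h2
  have hfinal : ‖deriv f w‖ ^ p ≤ 6 * r ^ (-p) := by
    apply hgwp.trans
    rw [div_le_iff₀ hV]
    have hre : r ^ (2 - p) = r ^ (-p) * r ^ 2 := by
      rw [show (2 - p : ℝ) = -p + 2 by ring, Real.rpow_add hr,
        show (2:ℝ) = ((2:ℕ):ℝ) from by norm_num, Real.rpow_natCast]
    calc A ≤ 6 * r ^ (2 - p) * Real.pi := hI2
      _ = 6 * r ^ (-p) * (Real.pi * r ^ 2) := by rw [hre]; ring
  have hgw2 : ‖deriv f w‖ ≤ 6 * r⁻¹ := by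
    have e0 : ‖deriv f w‖ = (‖deriv f w‖ ^ p) ^ (1/p) := by
      rw [← Real.rpow_mul (norm_nonneg _), mul_one_div, div_self (ne_of_gt hp0), Real.rpow_one]
    have e1 := Real.rpow_le_rpow (Real.rpow_nonneg (norm_nonneg _) _) hfinal
      (by positivity : (0:ℝ) ≤ 1/p)
    have e2 : ((6:ℝ) * r ^ (-p)) ^ (1/p) = 6 ^ (1/p) * r⁻¹ := by
      rw [Real.mul_rpow (by norm_num) (Real.rpow_nonneg hr.le _), ← Real.rpow_mul hr.le,
        show (-p * (1/p) : ℝ) = -1 by field_simp, Real.rpow_neg_one]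
    have e3 : (6:ℝ) ^ (1/p) ≤ 6 := by
      nth_rewrite 2 [show (6:ℝ) = 6 ^ (1:ℝ) from by rw [Real.rpow_one]]
      apply Real.rpow_le_rpow_of_exponent_le (by norm_num)
      rw [div_le_one hp0]
      linarith
    have e4 : (6:ℝ) ^ (1/p) * r⁻¹ ≤ 6 * r⁻¹ := by
      apply mul_le_mul_of_nonneg_right e3 (by positivity)
    rw [e0]
    exact le_trans (le_trans e1 (le_of_eq e2)) e4
  have h1w : 1 - ‖w‖ ^ 2 ≤ 4 * r := by nlinarith [norm_nonneg w]
  calc (1 - ‖w‖ ^ 2) * ‖deriv f w‖ ≤ (4 * r) * (6 * r⁻¹) :=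
      mul_le_mul h1w hgw2 (norm_nonneg _) (by positivity)
    _ = 24 := by field_simp; ring

lemma lemB2 {f : ℂ → ℂ} (hf : DifferentiableOn ℂ f (ball (0:ℂ) 1))
    (h24 : ∀ w ∈ ball (0:ℂ) 1, (1 - ‖w‖ ^ 2) * ‖deriv f w‖ ≤ 24) :
    ∀ w ∈ ball (0:ℂ) 1, ‖deriv (deriv f) w‖ ≤ 96 / (1 - ‖w‖) ^ 2 := by
  have hg : DifferentiableOn ℂ (deriv f) (ball (0:ℂ) 1) :=
    ((hf.analyticOnNhd isOpen_ball).deriv).differentiableOn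
  intro w hw
  rw [mem_ball, dist_zero_right] at hw
  set r : ℝ := (1 - ‖w‖) / 2 with hrdef
  have hr : 0 < r := by
    have := norm_nonneg w
    simp only [hrdef]; linarith
  have hsub : closedBall w r ⊆ ball (0:ℂ) 1 := by
    intro z hz
    rw [mem_closedBall, dist_eq_norm] at hz
    rw [mem_ball, dist_zero_right]
    have : ‖z‖ ≤ ‖w‖ + r := by
      calc ‖z‖ = ‖w + (z - w)‖ := by ring_nf
        _ ≤ ‖w‖ + ‖z - w‖ := norm_add_le _ _
        _ ≤ ‖w‖ + r := by linarith
    simp only [hrdef] at this ⊢; linarith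
  have hd : DiffContOnCl ℂ (deriv f) (ball w r) :=
    ⟨hg.mono (ball_subset_closedBall.trans hsub),
     hg.continuousOn.mono (closure_ball_subset_closedBall.trans hsub)⟩
  have hC : ∀ z ∈ sphere w r, ‖deriv f z‖ ≤ 24 / r := by
    intro z hz
    rw [mem_sphere, dist_eq_norm] at hz
    have hz1 : ‖z‖ < 1 := by
      have := mem_ball.1 (hsub (mem_closedBall.2 (by rw [dist_eq_norm, hz])))
      rwa [dist_zero_right] at this
    have hzw : ‖z‖ ≤ ‖w‖ + r := by
      calc ‖z‖ = ‖w + (z - w)‖ := by ring_nf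
        _ ≤ ‖w‖ + ‖z - w‖ := norm_add_le _ _
        _ = ‖w‖ + r := by rw [hz]
    have hlow : r ≤ 1 - ‖z‖ ^ 2 := by
      have h0 := norm_nonneg z
      simp only [hrdef] at hzw ⊢
      nlinarith
    have h1 := h24 z (hsub (mem_closedBall.2 (by rw [dist_eq_norm, hz])))
    have h2 : 0 < 1 - ‖z‖ ^ 2 := lt_of_lt_of_le hr hlow
    rw [le_div_iff₀ hr]
    nlinarith [mul_le_mul_of_nonneg_left hlow (norm_nonneg (deriv f z))]
  have := Complex.norm_deriv_le_of_forall_mem_sphere_norm_le hr hd hC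
  calc ‖deriv (deriv f) w‖ ≤ (24 / r) / r := this
    _ = 96 / (1 - ‖w‖) ^ 2 := by
      simp only [hrdef]
      field_simp
      ring

lemma norm_ofReal_mul (x : ℝ) (z : ℂ) : ‖((x:ℝ):ℂ) * z‖ = |x| * ‖z‖ := by
  rw [norm_mul, Complex.norm_real, Real.norm_eq_abs]

lemma lemB {f : ℂ → ℂ} (hf : DifferentiableOn ℂ f (ball (0:ℂ) 1))
    (h24 : ∀ w ∈ ball (0:ℂ) 1, (1 - ‖w‖ ^ 2) * ‖deriv f w‖ ≤ 24) :
    ∀ a ∈ ball (0:ℂ) 1, ∀ b ∈ ball (0:ℂ) 1,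
      ‖((1 - ‖a‖ ^ 2 : ℝ) : ℂ) * deriv f a - ((1 - ‖b‖ ^ 2 : ℝ) : ℂ) * deriv f b‖
        ≤ 8000 * ‖(a - b) / (1 - (starRingEnd ℂ) b * a)‖ := by
  have hg : DifferentiableOn ℂ (deriv f) (ball (0:ℂ) 1) :=
    ((hf.analyticOnNhd isOpen_ball).deriv).differentiableOn
  intro a ha' b hb'
  have ha : ‖a‖ < 1 := by rwa [mem_ball, dist_zero_right] at ha'
  have hb : ‖b‖ < 1 := by rwa [mem_ball, dist_zero_right] at hb'
  have ha0 := norm_nonneg a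
  have hb0 := norm_nonneg b
  have ha2 : (0:ℝ) < 1 - ‖a‖ ^ 2 := by nlinarith
  have hb2 : (0:ℝ) < 1 - ‖b‖ ^ 2 := by nlinarith
  set ρ : ℝ := ‖(a - b) / (1 - (starRingEnd ℂ) b * a)‖ with hρdef
  have hρ0 : 0 ≤ ρ := norm_nonneg _
  -- norms of the two weighted terms
  have hXa : ‖((1 - ‖a‖ ^ 2 : ℝ) : ℂ) * deriv f a‖ ≤ 24 := by
    rw [norm_ofReal_mul, abs_of_pos ha2]; exact h24 a ha'
  have hXb : ‖((1 - ‖b‖ ^ 2 : ℝ) : ℂ) * deriv f b‖ ≤ 24 := by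
    rw [norm_ofReal_mul, abs_of_pos hb2]; exact h24 b hb'
  have hden : (1:ℂ) - (starRingEnd ℂ) b * a ≠ 0 := by
    intro h
    rw [sub_eq_zero] at h
    have h1 : ‖(starRingEnd ℂ) b * a‖ < 1 := by
      rw [norm_mul, RCLike.norm_conj]
      nlinarith
    rw [← h] at h1
    simp at h1
  have hdenn : ‖(1:ℂ) - (starRingEnd ℂ) b * a‖ ≠ 0 := norm_ne_zero_iff.mpr hden
  have hρ_eq : ‖a - b‖ = ρ * ‖(1:ℂ) - (starRingEnd ℂ) b * a‖ := by
    rw [hρdef, norm_div, div_mul_cancel₀ _ hdenn]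
  rcases le_or_gt (1/4 : ℝ) ρ with hcase | hcase
  · -- easy case
    calc ‖((1 - ‖a‖ ^ 2 : ℝ) : ℂ) * deriv f a - ((1 - ‖b‖ ^ 2 : ℝ) : ℂ) * deriv f b‖
        ≤ ‖((1 - ‖a‖ ^ 2 : ℝ) : ℂ) * deriv f a‖ + ‖((1 - ‖b‖ ^ 2 : ℝ) : ℂ) * deriv f b‖ :=
          norm_sub_le _ _
      _ ≤ 48 := by linarith
      _ ≤ 8000 * ρ := by linarith
  · -- hard case : ρ < 1/4
    have hbb : (starRingEnd ℂ) b * b = ((‖b‖ ^ 2 : ℝ) : ℂ) := by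
      rw [mul_comm, Complex.mul_conj, Complex.normSq_eq_norm_sq]
    have hid : (1:ℂ) - (starRingEnd ℂ) b * a
        = ((1 - ‖b‖ ^ 2 : ℝ) : ℂ) + (starRingEnd ℂ) b * (b - a) := by
      have hbb2 : (starRingEnd ℂ) b * b = ((‖b‖:ℝ):ℂ) ^ 2 := by rw [hbb]; push_cast; ring
      push_cast
      linear_combination -hbb2
    have hden_le : ‖(1:ℂ) - (starRingEnd ℂ) b * a‖ ≤ (1 - ‖b‖ ^ 2) + ‖a - b‖ := by
      rw [hid]
      calc ‖((1 - ‖b‖ ^ 2 : ℝ) : ℂ) + (starRingEnd ℂ) b * (b - a)‖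
          ≤ ‖((1 - ‖b‖ ^ 2 : ℝ) : ℂ)‖ + ‖(starRingEnd ℂ) b * (b - a)‖ := norm_add_le _ _
        _ ≤ (1 - ‖b‖ ^ 2) + ‖a - b‖ := by
            rw [Complex.norm_real, Real.norm_eq_abs, abs_of_pos hb2, norm_mul, RCLike.norm_conj,
              norm_sub_rev]
            nlinarith [norm_nonneg (a - b)]
    have hab : ‖a - b‖ ≤ (4/3) * ρ * (1 - ‖b‖ ^ 2) := by
      have h5 : ρ * ‖(1:ℂ) - (starRingEnd ℂ) b * a‖ ≤ ρ * ((1 - ‖b‖ ^ 2) + ‖a - b‖) :=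
        mul_le_mul_of_nonneg_left hden_le hρ0
      nlinarith [mul_nonneg (by linarith : (0:ℝ) ≤ 1/4 - ρ) (norm_nonneg (a - b))]
    have hab2 : ‖a - b‖ ≤ (2/3) * (1 - ‖b‖) := by
      nlinarith [mul_le_mul_of_nonneg_right hcase.le hb2.le]
    -- segment facts
    have hseg1 : ∀ ζ ∈ segment ℝ b a, (1/3) * (1 - ‖b‖) ≤ 1 - ‖ζ‖ := by
      intro ζ hζ
      obtain ⟨u, v, hu, hv, huv, rfl⟩ := hζ
      have hζb : ‖u • b + v • a - b‖ = v * ‖a - b‖ := by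
        have : u • b + v • a - b = v • (a - b) := by
          have hu1 : u = 1 - v := by linarith
          rw [hu1]
          module
        rw [this, norm_smul, Real.norm_eq_abs, _root_.abs_of_nonneg hv]
      have hv1 : v ≤ 1 := by linarith
      have h6 : ‖u • b + v • a - b‖ ≤ ‖a - b‖ := by
        rw [hζb]
        nlinarith [norm_nonneg (a - b)]
      have h7 : ‖u • b + v • a‖ ≤ ‖b‖ + ‖a - b‖ := by
        calc ‖u • b + v • a‖ = ‖b + (u • b + v • a - b)‖ := by ring_nf
          _ ≤ ‖b‖ + ‖u • b + v • a - b‖ := norm_add_le _ _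
          _ ≤ ‖b‖ + ‖a - b‖ := by linarith
      linarith
    have hsegball : segment ℝ b a ⊆ ball (0:ℂ) 1 := by
      intro ζ hζ
      have := hseg1 ζ hζ
      rw [mem_ball, dist_zero_right]
      linarith
    -- second derivative bound on segment
    have hf'' : ∀ ζ ∈ segment ℝ b a, ‖deriv (deriv f) ζ‖ ≤ 864 / (1 - ‖b‖) ^ 2 := by
      intro ζ hζ
      have h8 := lemB2 hf h24 ζ (hsegball hζ)
      have h9 := hseg1 ζ hζ
      have hζ1 : ‖ζ‖ < 1 := by
        have := mem_ball.1 (hsegball hζ); rwa [dist_zero_right] at this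
      have h10 : (0:ℝ) < 1 - ‖ζ‖ := by linarith
      have h11 : (0:ℝ) < 1 - ‖b‖ := by linarith
      apply h8.trans
      rw [div_le_div_iff₀ (by positivity) (by positivity)]
      nlinarith
    -- mean value estimate
    have hMVT : ‖deriv f a - deriv f b‖ ≤ (864 / (1 - ‖b‖) ^ 2) * ‖a - b‖ := by
      apply Convex.norm_image_sub_le_of_norm_hasDerivWithin_le
        (f' := fun ζ => deriv (deriv f) ζ) ?_ hf'' (convex_segment b a)
        (left_mem_segment ℝ b a) (right_mem_segment ℝ b a)
      intro ζ hζ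
      exact ((hg.differentiableAt (isOpen_ball.mem_nhds (hsegball hζ))).hasDerivAt).hasDerivWithinAt
    -- decomposition
    have hdecomp : ((1 - ‖a‖ ^ 2 : ℝ) : ℂ) * deriv f a - ((1 - ‖b‖ ^ 2 : ℝ) : ℂ) * deriv f b
        = ((1 - ‖a‖ ^ 2 : ℝ) : ℂ) * (deriv f a - deriv f b)
          + ((‖b‖ ^ 2 - ‖a‖ ^ 2 : ℝ) : ℂ) * deriv f b := by
      push_cast
      ring
    have h11 : (0:ℝ) < 1 - ‖b‖ := by linarith
    -- term 1
    have hT1 : ‖((1 - ‖a‖ ^ 2 : ℝ) : ℂ) * (deriv f a - deriv f b)‖ ≤ 7680 * ρ := by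
      rw [norm_ofReal_mul, abs_of_pos ha2]
      have hc1 : 1 - ‖a‖ ^ 2 ≤ (10/3) * (1 - ‖b‖) := by
        have : ‖b‖ ≤ ‖a‖ + ‖a - b‖ := by
          calc ‖b‖ = ‖a - (a - b)‖ := by ring_nf
            _ ≤ ‖a‖ + ‖a - b‖ := norm_sub_le _ _
        nlinarith
      have hab3 : ‖a - b‖ ≤ (8/3) * ρ * (1 - ‖b‖) := by nlinarith
      have step : ‖deriv f a - deriv f b‖ ≤ (864 / (1 - ‖b‖) ^ 2) * ((8/3) * ρ * (1 - ‖b‖)) := by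
        apply hMVT.trans
        apply mul_le_mul_of_nonneg_left hab3 (by positivity)
      calc (1 - ‖a‖ ^ 2) * ‖deriv f a - deriv f b‖
          ≤ ((10/3) * (1 - ‖b‖)) * ((864 / (1 - ‖b‖) ^ 2) * ((8/3) * ρ * (1 - ‖b‖))) :=
            mul_le_mul hc1 step (norm_nonneg _) (by positivity)
        _ = 7680 * ρ := by
            have hc : (1 - ‖b‖ : ℝ) ≠ 0 := ne_of_gt h11
            generalize hcgen : (1 - ‖b‖ : ℝ) = c at hc ⊢
            field_simp
            ring
    -- term 2
    have hT2 : ‖((‖b‖ ^ 2 - ‖a‖ ^ 2 : ℝ) : ℂ) * deriv f b‖ ≤ 64 * ρ := by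
      rw [norm_ofReal_mul]
      have h12 : |‖b‖ ^ 2 - ‖a‖ ^ 2| ≤ 2 * ‖a - b‖ := by
        have h13 : |‖b‖ - ‖a‖| ≤ ‖a - b‖ := by
          rw [norm_sub_rev]; exact abs_norm_sub_norm_le b a
        rw [show ‖b‖ ^ 2 - ‖a‖ ^ 2 = (‖b‖ - ‖a‖) * (‖b‖ + ‖a‖) by ring, abs_mul,
          _root_.abs_of_nonneg (by linarith : (0:ℝ) ≤ ‖b‖ + ‖a‖)]
        nlinarith [abs_nonneg (‖b‖ - ‖a‖),
          mul_le_mul_of_nonneg_left h13 (by linarith : (0:ℝ) ≤ 2),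
          mul_le_mul_of_nonneg_left (show ‖b‖ + ‖a‖ ≤ 2 by linarith) (abs_nonneg (‖b‖ - ‖a‖))]
      have h14 : ‖deriv f b‖ ≤ 24 / (1 - ‖b‖ ^ 2) := by
        rw [le_div_iff₀ hb2]
        have := h24 b hb'
        linarith [mul_comm (1 - ‖b‖ ^ 2) ‖deriv f b‖]
      calc |‖b‖ ^ 2 - ‖a‖ ^ 2| * ‖deriv f b‖
          ≤ (2 * ‖a - b‖) * (24 / (1 - ‖b‖ ^ 2)) :=
            mul_le_mul h12 h14 (norm_nonneg _) (by positivity)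
        _ ≤ (2 * ((4/3) * ρ * (1 - ‖b‖ ^ 2))) * (24 / (1 - ‖b‖ ^ 2)) := by
            apply mul_le_mul_of_nonneg_right _ (by positivity)
            linarith
        _ = 64 * ρ := by
            have hc : (1 - ‖b‖ ^ 2 : ℝ) ≠ 0 := ne_of_gt hb2
            generalize hcgen : (1 - ‖b‖ ^ 2 : ℝ) = c at hc ⊢
            field_simp
            ring
    calc ‖((1 - ‖a‖ ^ 2 : ℝ) : ℂ) * deriv f a - ((1 - ‖b‖ ^ 2 : ℝ) : ℂ) * deriv f b‖
        = ‖((1 - ‖a‖ ^ 2 : ℝ) : ℂ) * (deriv f a - deriv f b)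
            + ((‖b‖ ^ 2 - ‖a‖ ^ 2 : ℝ) : ℂ) * deriv f b‖ := by rw [hdecomp]
      _ ≤ ‖((1 - ‖a‖ ^ 2 : ℝ) : ℂ) * (deriv f a - deriv f b)‖
            + ‖((‖b‖ ^ 2 - ‖a‖ ^ 2 : ℝ) : ℂ) * deriv f b‖ := norm_add_le _ _
      _ ≤ 7680 * ρ + 64 * ρ := by linarith
      _ ≤ 8000 * ρ := by linarith


set_option maxHeartbeats 2000000 in
/-- Uniform pointwise estimate for `(C_φ - C_ψ)f` over the unit ball of `B^p`. -/
theorem stmt_16 (p : ℝ) (hp : 1 < p) (φ ψ : ℂ → ℂ) (ν : ℂ → ℝ)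
    (hφ : DifferentiableOn ℂ φ (ball (0:ℂ) 1))
    (hψ : DifferentiableOn ℂ ψ (ball (0:ℂ) 1))
    (hφm : ∀ z ∈ ball (0:ℂ) 1, φ z ∈ ball (0:ℂ) 1)
    (hψm : ∀ z ∈ ball (0:ℂ) 1, ψ z ∈ ball (0:ℂ) 1)
    (hν : ∀ z ∈ ball (0:ℂ) 1, 0 < ν z) :
    ∃ C > 0, ∀ f : ℂ → ℂ,
      DifferentiableOn ℂ f (ball (0:ℂ) 1) →
      IntegrableOn (fun z : ℂ => ‖deriv f z‖ ^ p * (1 - ‖z‖ ^ 2) ^ (p - 2)) (ball (0:ℂ) 1) →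
      ‖f 0‖ + (Real.pi⁻¹ *
          ∫ w in ball (0:ℂ) 1, ‖deriv f w‖ ^ p * (1 - ‖w‖ ^ 2) ^ (p - 2)) ^ (1 / p) ≤ 1 →
      ∀ z ∈ ball (0:ℂ) 1,
        ν z * ‖deriv f (φ z) * deriv φ z - deriv f (ψ z) * deriv ψ z‖ ≤
          C * (‖((ν z : ℝ) : ℂ) * deriv φ z / ((1 - ‖φ z‖ ^ 2 : ℝ) : ℂ) -
                  ((ν z : ℝ) : ℂ) * deriv ψ z / ((1 - ‖ψ z‖ ^ 2 : ℝ) : ℂ)‖ +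
                (ν z * ‖deriv ψ z‖ / (1 - ‖ψ z‖ ^ 2)) *
                  ‖(φ z - ψ z) / (1 - (starRingEnd ℂ) (ψ z) * φ z)‖) := by
  have hp0 : (0:ℝ) < p := by linarith
  refine ⟨8000, by norm_num, ?_⟩
  intro f hdf hintf hnormf z hz
  -- extract the integral bound
  have hInn : 0 ≤ ∫ w in ball (0:ℂ) 1, ‖deriv f w‖ ^ p * (1 - ‖w‖ ^ 2) ^ (p - 2) := by
    apply setIntegral_nonneg measurableSet_ball
    intro x hx
    rw [mem_ball, dist_zero_right] at hx
    have h1 : (0:ℝ) ≤ ‖deriv f x‖ ^ p := Real.rpow_nonneg (norm_nonneg _) _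
    have h2 : (0:ℝ) ≤ (1 - ‖x‖ ^ 2) ^ (p - 2) :=
      Real.rpow_nonneg (by nlinarith [norm_nonneg x]) _
    exact mul_nonneg h1 h2
  have hI0 : 0 ≤ Real.pi⁻¹ * ∫ w in ball (0:ℂ) 1, ‖deriv f w‖ ^ p * (1 - ‖w‖ ^ 2) ^ (p - 2) := by
    positivity
  have h1 : (Real.pi⁻¹ * ∫ w in ball (0:ℂ) 1,
      ‖deriv f w‖ ^ p * (1 - ‖w‖ ^ 2) ^ (p - 2)) ^ (1 / p) ≤ 1 := by
    have := norm_nonneg (f 0)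
    linarith
  have h2 : Real.pi⁻¹ * (∫ w in ball (0:ℂ) 1,
      ‖deriv f w‖ ^ p * (1 - ‖w‖ ^ 2) ^ (p - 2)) ≤ 1 := by
    have e0 : ((Real.pi⁻¹ * ∫ w in ball (0:ℂ) 1,
        ‖deriv f w‖ ^ p * (1 - ‖w‖ ^ 2) ^ (p - 2)) ^ (1 / p)) ^ p
        = Real.pi⁻¹ * ∫ w in ball (0:ℂ) 1, ‖deriv f w‖ ^ p * (1 - ‖w‖ ^ 2) ^ (p - 2) := by
      rw [← Real.rpow_mul hI0, one_div, inv_mul_cancel₀ (ne_of_gt hp0), Real.rpow_one]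
    calc Real.pi⁻¹ * ∫ w in ball (0:ℂ) 1, ‖deriv f w‖ ^ p * (1 - ‖w‖ ^ 2) ^ (p - 2)
        = ((Real.pi⁻¹ * ∫ w in ball (0:ℂ) 1,
            ‖deriv f w‖ ^ p * (1 - ‖w‖ ^ 2) ^ (p - 2)) ^ (1 / p)) ^ p := e0.symm
      _ ≤ 1 ^ p := Real.rpow_le_rpow (Real.rpow_nonneg hI0 _) h1 hp0.le
      _ = 1 := Real.one_rpow p
  have hnorm : ∫ w in ball (0:ℂ) 1, ‖deriv f w‖ ^ p * (1 - ‖w‖ ^ 2) ^ (p - 2) ≤ Real.pi := by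
    have h3 := mul_le_mul_of_nonneg_left h2 Real.pi_pos.le
    rw [← mul_assoc, mul_inv_cancel₀ (ne_of_gt Real.pi_pos), one_mul, mul_one] at h3
    exact h3
  have h24 := lemA hp hdf hintf hnorm
  have hB := lemB hdf h24
  -- notation
  have ha' : φ z ∈ ball (0:ℂ) 1 := hφm z hz
  have hb' : ψ z ∈ ball (0:ℂ) 1 := hψm z hz
  have ha : ‖φ z‖ < 1 := by rwa [mem_ball, dist_zero_right] at ha'
  have hbn : ‖ψ z‖ < 1 := by rwa [mem_ball, dist_zero_right] at hb'
  have hα : (0:ℝ) < 1 - ‖φ z‖ ^ 2 := by nlinarith [norm_nonneg (φ z)]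
  have hβ : (0:ℝ) < 1 - ‖ψ z‖ ^ 2 := by nlinarith [norm_nonneg (ψ z)]
  have hαc : ((1 - ‖φ z‖ ^ 2 : ℝ) : ℂ) ≠ 0 := by
    exact_mod_cast Complex.ofReal_ne_zero.mpr (ne_of_gt hα)
  have hβc : ((1 - ‖ψ z‖ ^ 2 : ℝ) : ℂ) ≠ 0 := by
    exact_mod_cast Complex.ofReal_ne_zero.mpr (ne_of_gt hβ)
  have hνz : 0 < ν z := hν z hz
  -- algebraic decomposition
  have hαc2 : (1:ℂ) - ((‖φ z‖:ℝ):ℂ) ^ 2 ≠ 0 := by push_cast at hαc; exact hαc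
  have hβc2 : (1:ℂ) - ((‖ψ z‖:ℝ):ℂ) ^ 2 ≠ 0 := by push_cast at hβc; exact hβc
  have hid : ((ν z : ℝ) : ℂ) * (deriv f (φ z) * deriv φ z - deriv f (ψ z) * deriv ψ z)
      = (((1 - ‖φ z‖ ^ 2 : ℝ) : ℂ) * deriv f (φ z)) *
          (((ν z : ℝ) : ℂ) * deriv φ z / ((1 - ‖φ z‖ ^ 2 : ℝ) : ℂ) -
            ((ν z : ℝ) : ℂ) * deriv ψ z / ((1 - ‖ψ z‖ ^ 2 : ℝ) : ℂ))
        + (((1 - ‖φ z‖ ^ 2 : ℝ) : ℂ) * deriv f (φ z)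
            - ((1 - ‖ψ z‖ ^ 2 : ℝ) : ℂ) * deriv f (ψ z)) *
          (((ν z : ℝ) : ℂ) * deriv ψ z / ((1 - ‖ψ z‖ ^ 2 : ℝ) : ℂ)) := by
    push_cast
    field_simp
    ring
  have hL : ν z * ‖deriv f (φ z) * deriv φ z - deriv f (ψ z) * deriv ψ z‖
      = ‖((ν z : ℝ) : ℂ) * (deriv f (φ z) * deriv φ z - deriv f (ψ z) * deriv ψ z)‖ := by
    rw [norm_ofReal_mul, _root_.abs_of_pos hνz]
  have hnv : ‖((ν z : ℝ) : ℂ) * deriv ψ z / ((1 - ‖ψ z‖ ^ 2 : ℝ) : ℂ)‖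
      = ν z * ‖deriv ψ z‖ / (1 - ‖ψ z‖ ^ 2) := by
    rw [norm_div, norm_ofReal_mul, _root_.abs_of_pos hνz, Complex.norm_real,
      Real.norm_eq_abs, _root_.abs_of_pos hβ]
  have hX : ‖((1 - ‖φ z‖ ^ 2 : ℝ) : ℂ) * deriv f (φ z)‖ ≤ 24 := by
    rw [norm_ofReal_mul, _root_.abs_of_pos hα]
    exact h24 (φ z) ha'
  have hY := hB (φ z) ha' (ψ z) hb'
  have b1 : ‖(((1 - ‖φ z‖ ^ 2 : ℝ) : ℂ) * deriv f (φ z)) *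
        (((ν z : ℝ) : ℂ) * deriv φ z / ((1 - ‖φ z‖ ^ 2 : ℝ) : ℂ) -
          ((ν z : ℝ) : ℂ) * deriv ψ z / ((1 - ‖ψ z‖ ^ 2 : ℝ) : ℂ))‖
      ≤ 24 * ‖((ν z : ℝ) : ℂ) * deriv φ z / ((1 - ‖φ z‖ ^ 2 : ℝ) : ℂ) -
          ((ν z : ℝ) : ℂ) * deriv ψ z / ((1 - ‖ψ z‖ ^ 2 : ℝ) : ℂ)‖ := by
    rw [norm_mul]
    exact mul_le_mul_of_nonneg_right hX (norm_nonneg _)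
  have b2 : ‖(((1 - ‖φ z‖ ^ 2 : ℝ) : ℂ) * deriv f (φ z)
        - ((1 - ‖ψ z‖ ^ 2 : ℝ) : ℂ) * deriv f (ψ z)) *
          (((ν z : ℝ) : ℂ) * deriv ψ z / ((1 - ‖ψ z‖ ^ 2 : ℝ) : ℂ))‖
      ≤ (8000 * ‖(φ z - ψ z) / (1 - (starRingEnd ℂ) (ψ z) * φ z)‖) *
          (ν z * ‖deriv ψ z‖ / (1 - ‖ψ z‖ ^ 2)) := by
    rw [norm_mul, hnv]
    exact mul_le_mul_of_nonneg_right hY (by positivity)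
  have hsum := (norm_add_le _ _).trans (add_le_add b1 b2)
  rw [← hid] at hsum
  rw [hL]
  refine hsum.trans ?_
  have hT10 : (0:ℝ) ≤ ‖((ν z : ℝ) : ℂ) * deriv φ z / ((1 - ‖φ z‖ ^ 2 : ℝ) : ℂ) -
      ((ν z : ℝ) : ℂ) * deriv ψ z / ((1 - ‖ψ z‖ ^ 2 : ℝ) : ℂ)‖ := norm_nonneg _
  have hρ0 : (0:ℝ) ≤ ‖(φ z - ψ z) / (1 - (starRingEnd ℂ) (ψ z) * φ z)‖ := norm_nonneg _
  have hnv0 : (0:ℝ) ≤ ν z * ‖deriv ψ z‖ / (1 - ‖ψ z‖ ^ 2) := by positivity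
  nlinarith
end

section
/- Let a_n, b_n, r_n be sequences of nonnegative reals with r_n < 1 for all n. Suppose |a_n - b_n(1-r_n²)| → 0 and a_n·r_n·(1-r_n²) → 0 as n → ∞. If a_n·r_n does not converge to 0, then (along a subsequence where a_n r_n is bounded away from 0) 1 - r_n² → 0 and hence a_n → 0, a contradiction; therefore a_n·r_n → 0. -/
set_option autoImplicit false

private lemma key_17 (a b r : ℕ → ℝ)
    (ha : ∀ n, 0 ≤ a n) (hr0 : ∀ n, 0 ≤ r n) (hr1 : ∀ n, r n < 1)
    (h1 : Filter.Tendsto (fun n => |a n - b n * (1 - r n ^ 2)|) Filter.atTop (nhds 0))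
    (h2 : Filter.Tendsto (fun n => |b n - a n * (1 - r n ^ 2)|) Filter.atTop (nhds 0))
    (h4 : Filter.Tendsto (fun n => a n * r n * (1 - r n ^ 2)) Filter.atTop (nhds 0)) :
    Filter.Tendsto (fun n => a n * r n) Filter.atTop (nhds 0) := by
  have hcube : Filter.Tendsto (fun n => a n * r n ^ 3) Filter.atTop (nhds 0) := by
    have hsum : Filter.Tendsto
        (fun n => |a n - b n * (1 - r n ^ 2)| + |b n - a n * (1 - r n ^ 2)|)
        Filter.atTop (nhds 0) := by
      simpa using h1.add h2
    refine squeeze_zero (fun n => mul_nonneg (ha n) (pow_nonneg (hr0 n) 3)) (fun n => ?_) hsum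
    have h5 := le_abs_self (a n - b n * (1 - r n ^ 2))
    have h6 := le_abs_self (b n - a n * (1 - r n ^ 2))
    have h7 := abs_nonneg (b n - a n * (1 - r n ^ 2))
    have h8 := hr0 n
    have h9 := hr1 n
    have h10 := ha n
    have ht0 : (0:ℝ) ≤ 1 - r n ^ 2 := by nlinarith
    have ht1 : (1:ℝ) - r n ^ 2 ≤ 1 := by nlinarith
    have h11 : (1 - r n ^ 2) * (b n - a n * (1 - r n ^ 2)) ≤
        (1 - r n ^ 2) * |b n - a n * (1 - r n ^ 2)| :=
      mul_le_mul_of_nonneg_left h6 ht0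
    have h12 : (1 - r n ^ 2) * |b n - a n * (1 - r n ^ 2)| ≤
        |b n - a n * (1 - r n ^ 2)| := mul_le_of_le_one_left h7 ht1
    have h13 : (0:ℝ) ≤ a n * (r n * r n) * (2 - r n ^ 2 - r n) :=
      mul_nonneg (mul_nonneg h10 (mul_nonneg h8 h8)) (by nlinarith)
    nlinarith [h13]
  have : Filter.Tendsto (fun n => a n * r n * (1 - r n ^ 2) + a n * r n ^ 3)
      Filter.atTop (nhds 0) := by simpa using h4.add hcube
  refine this.congr (fun n => by ring)

/-- Abstract limit argument from the compactness proof: the four vanishing conditions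
force `aₙrₙ → 0` and `bₙrₙ → 0`. -/
theorem stmt_17 (a b r : ℕ → ℝ)
    (ha : ∀ n, 0 ≤ a n) (hb : ∀ n, 0 ≤ b n) (hr0 : ∀ n, 0 ≤ r n) (hr1 : ∀ n, r n < 1)
    (h1 : Filter.Tendsto (fun n => |a n - b n * (1 - r n ^ 2)|) Filter.atTop (nhds 0))
    (h2 : Filter.Tendsto (fun n => |b n - a n * (1 - r n ^ 2)|) Filter.atTop (nhds 0))
    (h3 : Filter.Tendsto (fun n => b n * r n * (1 - r n ^ 2)) Filter.atTop (nhds 0))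
    (h4 : Filter.Tendsto (fun n => a n * r n * (1 - r n ^ 2)) Filter.atTop (nhds 0)) :
    Filter.Tendsto (fun n => a n * r n) Filter.atTop (nhds 0) ∧
      Filter.Tendsto (fun n => b n * r n) Filter.atTop (nhds 0) := by
  exact ⟨key_17 a b r ha hr0 hr1 h1 h2 h4, key_17 b a r hb hr0 hr1 h2 h1 h3⟩
end
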